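/- Let X be a subset of ℝ^k, δ > 0, and μ a δ-Ahlfors–David regular Borel probability measure supported on X. Let (B_n = B(x_n, r_n)) be a sequence of balls in X with r_n → 0 such that μ(limsup_n B_n) = 1. Then for every t ≥ 1, the Hausdorff dimension of limsup_n B(x_n, r_n^t) is at least δ/t. -/

import Mathlib

open Set MeasureTheory Metric Filter Topology ENNReal NNReal

noncomputable section

/-- The limsup of a sequence of sets: points belonging to infinitely many of them. -/
def limsupSet {X : Type*} (A : ℕ → Set X) : Set X :=
  ⋂ N, ⋃ n, ⋃ (_ : N ≤ n), A n

/-- `s`-dimensional Hausdorff content, via covers by countably many closed balls. -/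
def hContent {X : Type*} [PseudoMetricSpace X] (s : ℝ) (E : Set X) : ℝ≥0∞ :=
  ⨅ (c : ℕ → X) (r : ℕ → ℝ) (_ : ∀ n, 0 ≤ r n)
    (_ : E ⊆ ⋃ n, Metric.closedBall (c n) (r n)),
    ∑' n, ENNReal.ofReal (r n ^ s)

/-- A dimension function: continuous on `(0,∞)`, positive, tending to `0` at `0`. -/
def IsDimFun (f : ℝ → ℝ) : Prop :=
  ContinuousOn f (Set.Ioi 0) ∧ (∀ r > 0, 0 < f r) ∧
    Filter.Tendsto f (nhdsWithin 0 (Set.Ioi 0)) (nhds 0)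

/-- The `ρ`-approximate Hausdorff `f`-measure. -/
def preHausdorffF {X : Type*} [PseudoMetricSpace X] (f : ℝ → ℝ) (ρ : ℝ) (F : Set X) : ℝ≥0∞ :=
  ⨅ (c : ℕ → X) (r : ℕ → ℝ) (_ : ∀ n, 0 < r n ∧ r n < ρ)
    (_ : F ⊆ ⋃ n, Metric.ball (c n) (r n)),
    ∑' n, ENNReal.ofReal (f (r n))

/-- The Hausdorff `f`-measure, obtained as `ρ → 0` (equivalently, the supremum over `ρ > 0`). -/
def hausdorffF {X : Type*} [PseudoMetricSpace X] (f : ℝ → ℝ) (F : Set X) : ℝ≥0∞ :=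
  ⨆ (ρ : ℝ) (_ : 0 < ρ), preHausdorffF f ρ F

end

noncomputable section

namespace JaffardProof

structure Cfg (k : ℕ) : Type where
  hk : 0 < k
  S : Set (Fin k → ℝ)
  μ : Measure (Fin k → ℝ)
  δ : ℝ
  c₁ : ℝ
  c₂ : ℝ
  r₀ : ℝ
  t : ℝ
  s : ℝ
  x : ℕ → Fin k → ℝ
  r : ℕ → ℝ
  hδ : 0 < δ
  hc₁ : 0 < c₁
  hc₂ : 0 < c₂
  hr₀ : 0 < r₀
  hprob : IsProbabilityMeasure μ
  hreg : ∀ y ∈ S, ∀ ρ : ℝ, 0 < ρ → ρ < r₀ →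
    ENNReal.ofReal (c₁ * ρ ^ δ) ≤ μ (closedBall y ρ) ∧
      μ (closedBall y ρ) ≤ ENNReal.ofReal (c₂ * ρ ^ δ)
  y₀ : Fin k → ℝ
  hy₀ : y₀ ∈ S
  hxS : ∀ n, x n ∈ S
  hrpos : ∀ n, 0 < r n
  hrtend : Tendsto r atTop (nhds 0)
  hfull : μ (limsupSet fun n => closedBall (x n) (r n)) = 1
  ht : 1 ≤ t
  hs : 0 < s
  hst : s * t < δ

variable {k : ℕ} (c : Cfg k)

namespace Cfg

/-- real mass of the n-th full ball -/
def mass (n : ℕ) : ℝ := (c.μ (closedBall (c.x n) (c.r n))).toReal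

def κ : ℝ := c.c₁ ^ 2 * (1/2 : ℝ) ^ c.δ / (c.c₂ * (20 : ℝ) ^ c.δ * 2)

def ρ₀ : ℝ := min 1 c.r₀ / 100

lemma ρ₀_pos : 0 < c.ρ₀ := by
  have := c.hr₀; unfold ρ₀; positivity

lemma ρ₀_le_one : c.ρ₀ ≤ 1 := by
  unfold ρ₀
  have : min 1 c.r₀ ≤ 1 := min_le_left _ _
  linarith

lemma ρ₀_le : c.ρ₀ ≤ c.r₀ / 100 := by
  unfold ρ₀
  have : min 1 c.r₀ ≤ c.r₀ := min_le_right _ _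
  linarith

lemma κ_pos : 0 < c.κ := by
  have h1 := c.hc₁; have h2 := c.hc₂
  have : (0:ℝ) < (1/2 : ℝ) ^ c.δ := Real.rpow_pos_of_pos (by norm_num) _
  have : (0:ℝ) < (20 : ℝ) ^ c.δ := Real.rpow_pos_of_pos (by norm_num) _
  unfold κ; positivity

lemma ht0 : 0 < c.t := lt_of_lt_of_le one_pos c.ht

lemma hsδ : c.s < c.δ := by
  have := c.hst
  have hs := c.hs
  have ht := c.ht
  nlinarith

lemma hstδ : c.s * c.t < c.δ := c.hst

lemma hμfin (A : Set (Fin k → ℝ)) : c.μ A ≠ ⊤ := by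
  have := c.hprob
  exact (measure_lt_top c.μ A).ne

lemma mass_lower {n : ℕ} (h : c.r n < c.r₀) : c.c₁ * c.r n ^ c.δ ≤ c.mass n := by
  have h1 := (c.hreg (c.x n) (c.hxS n) (c.r n) (c.hrpos n) h).1
  have := c.hμfin (closedBall (c.x n) (c.r n))
  exact (ENNReal.ofReal_le_iff_le_toReal this).1 h1

lemma mass_upper {n : ℕ} (h : c.r n < c.r₀) : c.mass n ≤ c.c₂ * c.r n ^ c.δ := by
  have h1 := (c.hreg (c.x n) (c.hxS n) (c.r n) (c.hrpos n) h).2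
  have h2 : (0:ℝ) ≤ c.c₂ * c.r n ^ c.δ := by
    have := c.hc₂.le
    have := (Real.rpow_pos_of_pos (c.hrpos n) c.δ).le
    positivity
  calc c.mass n ≤ (ENNReal.ofReal (c.c₂ * c.r n ^ c.δ)).toReal := ENNReal.toReal_mono
        (by simp [ENNReal.ofReal_ne_top]) h1
    _ = c.c₂ * c.r n ^ c.δ := ENNReal.toReal_ofReal h2

lemma mass_pos {n : ℕ} (h : c.r n < c.r₀) : 0 < c.mass n :=
  lt_of_lt_of_le (by
    have := c.hc₁
    have := Real.rpow_pos_of_pos (c.hrpos n) c.δ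
    positivity) (c.mass_lower h)

lemma limsup_meas : MeasurableSet (limsupSet fun n => closedBall (c.x n) (c.r n)) := by
  apply MeasurableSet.iInter; intro N
  apply MeasurableSet.iUnion; intro n
  apply MeasurableSet.iUnion; intro _
  exact measurableSet_closedBall

lemma compl_null : c.μ (limsupSet fun n => closedBall (c.x n) (c.r n))ᶜ = 0 := by
  have := c.hprob
  rw [measure_compl c.limsup_meas (c.hμfin _), c.hfull]
  simp


/-- The key covering lemma: inside `closedBall y ρ`, find finitely many full balls with
separated 4-dilates, indices ≥ N₀, radii ≤ ε, carrying a definite proportion of the mass. -/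
lemma children (y : Fin k → ℝ) (hy : y ∈ c.S) {ρ ε : ℝ} (hρ0 : 0 < ρ) (hρ : ρ ≤ c.ρ₀)
    (hε : 0 < ε) (N₀ : ℕ) :
    ∃ J : Finset ℕ,
      (∀ n ∈ J, N₀ ≤ n ∧ c.r n ≤ ε ∧ c.r n ≤ ρ/4 ∧
        closedBall (c.x n) (c.r n) ⊆ closedBall y ρ) ∧
      ((J : Set ℕ).PairwiseDisjoint fun n => closedBall (c.x n) (4 * c.r n)) ∧
      c.κ * ρ ^ c.δ ≤ ∑ n ∈ J, c.mass n := by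
  classical
  have hprob := c.hprob
  set m : ℝ := min (min ε (ρ/4)) (c.r₀/21) with hm
  have hsm : (0:ℝ) < m := by have := c.hr₀; positivity
  obtain ⟨N, hN⟩ := eventually_atTop.1 (c.hrtend.eventually (gt_mem_nhds hsm))
  set N₁ := max N N₀ with hN₁def
  have hNsmall : ∀ n, N₁ ≤ n → c.r n < m := fun n hn => hN n (le_trans (le_max_left _ _) hn)
  have hrr₀ : ∀ n, N₁ ≤ n → c.r n < c.r₀ := by
    intro n hn
    have := hNsmall n hn
    have h1 : m ≤ c.r₀/21 := min_le_right _ _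
    have := c.hr₀
    linarith
  set L := limsupSet fun n => closedBall (c.x n) (c.r n) with hL
  set A := closedBall y (ρ/2) ∩ L with hA
  have hρr₀ : ρ < c.r₀ := lt_of_le_of_lt hρ (lt_of_le_of_lt c.ρ₀_le (by have := c.hr₀; linarith))
  have hρ2 : (0:ℝ) < ρ/2 := by linarith
  have hμA : ENNReal.ofReal (c.c₁ * (ρ/2) ^ c.δ) ≤ c.μ A := by
    have h1 := (c.hreg y hy (ρ/2) hρ2 (by linarith)).1
    have h2 : c.μ A = c.μ (closedBall y (ρ/2)) := by
      rw [hA]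
      exact measure_inter_conull c.compl_null
    rw [h2]; exact h1
  -- the covering family
  set F : Set ℕ := {n | N₁ ≤ n ∧ (closedBall (c.x n) (c.r n) ∩ A).Nonempty} with hF
  have hcover : A ⊆ ⋃ n ∈ F, closedBall (c.x n) (c.r n) := by
    intro a ha
    have haL : a ∈ L := ha.2
    rw [hL, limsupSet, mem_iInter] at haL
    have := haL N₁
    simp only [mem_iUnion] at this
    obtain ⟨n, hn, han⟩ := this
    exact mem_iUnion₂.2 ⟨n, ⟨hn, ⟨a, han, ha⟩⟩, han⟩
  -- Vitali
  obtain ⟨u, huF, hudisj, hucov⟩ :=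
    Vitali.exists_disjoint_subfamily_covering_enlargement_closedBall F c.x
      (fun n => 4 * c.r n) (4 * m) (fun n hn => by
        have := hNsmall n hn.1; linarith) 5 (by norm_num)
  have hucount : u.Countable := Set.to_countable u
  have hAcov : A ⊆ ⋃ n ∈ u, closedBall (c.x n) (20 * c.r n) := by
    intro a ha
    obtain ⟨n, hnF, han⟩ := mem_iUnion₂.1 (hcover ha)
    obtain ⟨b, hbu, hsub⟩ := hucov n hnF
    refine mem_iUnion₂.2 ⟨b, hbu, ?_⟩
    have h4 : a ∈ closedBall (c.x n) (4 * c.r n) :=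
      closedBall_subset_closedBall (by have := (c.hrpos n).le; linarith) han
    have := hsub h4
    simpa [show (5:ℝ) * (4 * c.r b) = 20 * c.r b by ring] using this
  -- measure estimate
  set K : ℝ := c.c₂ * (20:ℝ) ^ c.δ / c.c₁ with hK
  have hKpos : 0 < K := by
    have := c.hc₁; have := c.hc₂
    have h20 : (0:ℝ) < (20:ℝ) ^ c.δ := Real.rpow_pos_of_pos (by norm_num) _
    positivity
  have hub : ∀ n ∈ u, c.μ (closedBall (c.x n) (20 * c.r n)) ≤
      ENNReal.ofReal (K * (c.c₁ * c.r n ^ c.δ)) := by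
    intro n hn
    have hn1 := (huF hn).1
    have h20 : 20 * c.r n < c.r₀ := by
      have := hNsmall n hn1
      have h1 : m ≤ c.r₀/21 := min_le_right _ _
      have := c.hr₀
      linarith
    have h0 : (0:ℝ) < 20 * c.r n := by have := c.hrpos n; linarith
    have := (c.hreg (c.x n) (c.hxS n) _ h0 h20).2
    refine this.trans (le_of_eq ?_)
    congr 1
    have hrn := c.hrpos n
    rw [Real.mul_rpow (by norm_num) hrn.le, hK]
    have := c.hc₁.ne'
    field_simp
  have hlow : ∀ n ∈ u, ENNReal.ofReal (c.c₁ * c.r n ^ c.δ) ≤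
      c.μ (closedBall (c.x n) (c.r n)) := by
    intro n hn
    exact (c.hreg (c.x n) (c.hxS n) _ (c.hrpos n) (hrr₀ n (huF hn).1)).1
  have hchain : ENNReal.ofReal (c.c₁ * (ρ/2) ^ c.δ) ≤
      ENNReal.ofReal K * ∑' n : u, c.μ (closedBall (c.x (n:ℕ)) (c.r (n:ℕ))) := by
    calc ENNReal.ofReal (c.c₁ * (ρ/2) ^ c.δ) ≤ c.μ A := hμA
      _ ≤ c.μ (⋃ n ∈ u, closedBall (c.x n) (20 * c.r n)) := measure_mono hAcov
      _ ≤ ∑' n : u, c.μ (closedBall (c.x (n:ℕ)) (20 * c.r (n:ℕ))) :=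
          measure_biUnion_le c.μ hucount _
      _ ≤ ∑' n : u, ENNReal.ofReal K * c.μ (closedBall (c.x (n:ℕ)) (c.r (n:ℕ))) := by
          apply ENNReal.tsum_le_tsum
          intro n
          calc c.μ (closedBall (c.x (n:ℕ)) (20 * c.r (n:ℕ)))
              ≤ ENNReal.ofReal (K * (c.c₁ * c.r (n:ℕ) ^ c.δ)) := hub n n.2
            _ = ENNReal.ofReal K * ENNReal.ofReal (c.c₁ * c.r (n:ℕ) ^ c.δ) :=
                ENNReal.ofReal_mul hKpos.le
            _ ≤ ENNReal.ofReal K * c.μ (closedBall (c.x (n:ℕ)) (c.r (n:ℕ))) := by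
                gcongr
                exact hlow n n.2
      _ = ENNReal.ofReal K * ∑' n : u, c.μ (closedBall (c.x (n:ℕ)) (c.r (n:ℕ))) :=
          ENNReal.tsum_mul_left
  have h2κ : c.c₁ * (ρ/2) ^ c.δ = K * (2 * (c.κ * ρ ^ c.δ)) := by
    rw [Cfg.κ, hK]
    have h1 : (ρ/2) ^ c.δ = (1/2:ℝ) ^ c.δ * ρ ^ c.δ := by
      rw [← Real.mul_rpow (by norm_num) hρ0.le]
      congr 1
      ring
    rw [h1]
    have := c.hc₁.ne'
    have := c.hc₂.ne'
    have h20 : ((20:ℝ) ^ c.δ) ≠ 0 := (Real.rpow_pos_of_pos (by norm_num) _).ne'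
    field_simp
  have hsum_lt : ENNReal.ofReal (c.κ * ρ ^ c.δ) <
      ∑' n : u, c.μ (closedBall (c.x (n:ℕ)) (c.r (n:ℕ))) := by
    have hpos : 0 < c.κ * ρ ^ c.δ :=
      mul_pos c.κ_pos (Real.rpow_pos_of_pos hρ0 _)
    have h2 : ENNReal.ofReal (2 * (c.κ * ρ ^ c.δ)) ≤
        ∑' n : u, c.μ (closedBall (c.x (n:ℕ)) (c.r (n:ℕ))) := by
      rw [h2κ, ENNReal.ofReal_mul hKpos.le] at hchain
      exact (ENNReal.mul_le_mul_iff_right (by simp [hKpos]) ENNReal.ofReal_ne_top).1 hchain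
    calc ENNReal.ofReal (c.κ * ρ ^ c.δ) < ENNReal.ofReal (2 * (c.κ * ρ ^ c.δ)) := by
          rw [ENNReal.ofReal_lt_ofReal_iff (by linarith)]; linarith
      _ ≤ _ := h2
  -- extract a finite subfamily
  rw [ENNReal.tsum_eq_iSup_sum] at hsum_lt
  obtain ⟨v, hv⟩ := lt_iSup_iff.1 hsum_lt
  set J : Finset ℕ := v.image Subtype.val with hJ
  have hJu : ∀ n ∈ J, n ∈ u := by
    intro n hn
    obtain ⟨a, _, rfl⟩ := Finset.mem_image.1 hn
    exact a.2
  refine ⟨J, ?_, ?_, ?_⟩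
  · intro n hn
    have hnu := hJu n hn
    have hn1 := (huF hnu).1
    have hsmall := hNsmall n hn1
    have hε' : c.r n ≤ ε :=
      le_of_lt (lt_of_lt_of_le hsmall ((min_le_left _ _).trans (min_le_left _ _)))
    have hρ4 : c.r n ≤ ρ/4 :=
      le_of_lt (lt_of_lt_of_le hsmall ((min_le_left _ _).trans (min_le_right _ _)))
    refine ⟨le_trans (le_max_right _ _) hn1, hε', hρ4, ?_⟩
    obtain ⟨a, ha1, ha2⟩ := (huF hnu).2
    have hd : dist (c.x n) y ≤ ρ/2 + c.r n := by
      have h1 : dist a (c.x n) ≤ c.r n := mem_closedBall.1 ha1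
      have h2 : dist a y ≤ ρ/2 := mem_closedBall.1 ha2.1
      calc dist (c.x n) y ≤ dist (c.x n) a + dist a y := dist_triangle _ _ _
        _ ≤ c.r n + ρ/2 := by rw [dist_comm (c.x n) a]; linarith
        _ = ρ/2 + c.r n := by ring
    apply closedBall_subset_closedBall'
    linarith
  · intro a ha b hb hab
    exact hudisj (hJu a ha) (hJu b hb) hab
  · have hsum : ∑ n ∈ J, c.μ (closedBall (c.x n) (c.r n)) =
        ∑ n ∈ v, c.μ (closedBall (c.x (n:ℕ)) (c.r (n:ℕ))) :=
      Finset.sum_image (fun a _ b _ hab => Subtype.ext hab)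
    rw [← hsum] at hv
    have hfin : ∀ n ∈ J, c.μ (closedBall (c.x n) (c.r n)) ≠ ⊤ := fun n _ => c.hμfin _
    have hmono := ENNReal.toReal_mono (ENNReal.sum_ne_top.2 hfin) hv.le
    rw [ENNReal.toReal_ofReal (by
      have := c.κ_pos.le
      have := (Real.rpow_pos_of_pos hρ0 c.δ).le
      positivity), ENNReal.toReal_sum hfin] at hmono
    exact hmono


/-! ### selection from a finset -/

def sel (J : Finset ℕ) (a : ℕ) : ℕ := (J.sort (·≤·)).getD a 0

lemma sel_mem {J : Finset ℕ} {a : ℕ} (h : a < J.card) : sel J a ∈ J := by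
  have hlen : (J.sort (·≤·)).length = J.card := Finset.length_sort _
  rw [sel, List.getD_eq_getElem _ _ (by rw [hlen]; exact h)]
  rw [← Finset.mem_sort (α := ℕ) (· ≤ ·)]
  exact List.getElem_mem _

lemma sel_inj {J : Finset ℕ} {a b : ℕ} (ha : a < J.card) (hb : b < J.card)
    (h : sel J a = sel J b) : a = b := by
  have hlen : (J.sort (·≤·)).length = J.card := Finset.length_sort _
  have hnd : (J.sort (·≤·)).Nodup := J.sort_nodup _
  rw [sel, sel, List.getD_eq_getElem _ _ (by rw [hlen]; exact ha),
    List.getD_eq_getElem _ _ (by rw [hlen]; exact hb)] at h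
  exact (List.Nodup.getElem_inj_iff hnd).1 h

/-! ### the `ε` function controlling radii of children -/

def εfun (ρ : ℝ) : ℝ :=
  min (ρ/4) ((c.κ/c.c₂ * ρ ^ (c.δ - c.s)) ^ (1/(c.δ - c.s*c.t)))

lemma εfun_pos {ρ : ℝ} (hρ : 0 < ρ) : 0 < c.εfun ρ := by
  apply lt_min (by linarith)
  apply Real.rpow_pos_of_pos
  exact mul_pos (div_pos c.κ_pos c.hc₂) (Real.rpow_pos_of_pos hρ _)

lemma εfun_le {ρ : ℝ} : c.εfun ρ ≤ ρ/4 := min_le_left _ _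

/-- the key smallness consequence of `εfun` -/
lemma εfun_spec {ρ z : ℝ} (hρ : 0 < ρ) (hz : 0 < z) (h : z ≤ c.εfun ρ) :
    c.c₂ * z ^ (c.δ - c.s * c.t) ≤ c.κ * ρ ^ (c.δ - c.s) := by
  have hexp : 0 < c.δ - c.s * c.t := by have := c.hst; linarith
  have hbase : (0:ℝ) < c.κ/c.c₂ * ρ ^ (c.δ - c.s) :=
    mul_pos (div_pos c.κ_pos c.hc₂) (Real.rpow_pos_of_pos hρ _)
  have h1 : z ≤ (c.κ/c.c₂ * ρ ^ (c.δ - c.s)) ^ (1/(c.δ - c.s*c.t)) :=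
    h.trans (by rw [εfun]; exact min_le_right _ _)
  have h2 : z ^ (c.δ - c.s * c.t) ≤
      ((c.κ/c.c₂ * ρ ^ (c.δ - c.s)) ^ (1/(c.δ - c.s*c.t))) ^ (c.δ - c.s * c.t) :=
    Real.rpow_le_rpow hz.le h1 hexp.le
  rw [← Real.rpow_mul hbase.le, one_div, inv_mul_cancel₀ hexp.ne', Real.rpow_one] at h2
  calc c.c₂ * z ^ (c.δ - c.s*c.t) ≤ c.c₂ * (c.κ/c.c₂ * ρ ^ (c.δ - c.s)) :=
        mul_le_mul_of_nonneg_left h2 c.hc₂.le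
    _ = c.κ * ρ ^ (c.δ - c.s) := by
        field_simp
        rw [mul_comm c.c₂, mul_div_assoc, div_self c.hc₂.ne', mul_one]

/-! ### the tree construction -/

open Classical in
def childF (y : Fin k → ℝ) (ρ : ℝ) (N₀ : ℕ) : Finset ℕ :=
  if h : y ∈ c.S ∧ 0 < ρ ∧ ρ ≤ c.ρ₀ then
    (c.children y h.1 h.2.1 h.2.2 (c.εfun_pos h.2.1) N₀).choose
  else ∅

lemma childF_spec {y : Fin k → ℝ} {ρ : ℝ} (hy : y ∈ c.S) (hρ0 : 0 < ρ) (hρ : ρ ≤ c.ρ₀)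
    (N₀ : ℕ) :
    (∀ n ∈ c.childF y ρ N₀, N₀ ≤ n ∧ c.r n ≤ c.εfun ρ ∧ c.r n ≤ ρ/4 ∧
        closedBall (c.x n) (c.r n) ⊆ closedBall y ρ) ∧
      (((c.childF y ρ N₀ : Finset ℕ) : Set ℕ).PairwiseDisjoint
        fun n => closedBall (c.x n) (4 * c.r n)) ∧
      c.κ * ρ ^ c.δ ≤ ∑ n ∈ c.childF y ρ N₀, c.mass n := by
  have h : y ∈ c.S ∧ 0 < ρ ∧ ρ ≤ c.ρ₀ := ⟨hy, hρ0, hρ⟩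
  rw [childF, dif_pos h]

  exact (c.children y h.1 h.2.1 h.2.2 (c.εfun_pos h.2.1) N₀).choose_spec

/-- node data: `none` is the root, `some n` refers to the ball of index `n`. -/
def nd : List ℕ → Option ℕ
  | [] => none
  | a :: l =>
      some (sel (c.childF ((nd l).elim c.y₀ c.x)
        ((nd l).elim c.ρ₀ (fun n => c.r n ^ c.t)) (l.length + 1)) a)

def ctr (l : List ℕ) : Fin k → ℝ := (c.nd l).elim c.y₀ c.x

/-- the (shrunk) radius of a node -/
def rad (l : List ℕ) : ℝ := (c.nd l).elim c.ρ₀ (fun n => c.r n ^ c.t)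

/-- the children index finset of a node -/
def chl (l : List ℕ) : Finset ℕ := c.childF (c.ctr l) (c.rad l) (l.length + 1)

lemma nd_cons (a : ℕ) (l : List ℕ) : c.nd (a :: l) = some (sel (c.chl l) a) := by
  rw [nd]; rfl

lemma ctr_cons (a : ℕ) (l : List ℕ) : c.ctr (a :: l) = c.x (sel (c.chl l) a) := by
  rw [ctr, nd_cons]; rfl

lemma rad_cons (a : ℕ) (l : List ℕ) : c.rad (a :: l) = c.r (sel (c.chl l) a) ^ c.t := by
  rw [rad, nd_cons]; rfl

/-- the valid nodes of level `m` -/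
def P : ℕ → Finset (List ℕ)
  | 0 => {[]}
  | m+1 => (P m).biUnion fun l => (Finset.range (c.chl l).card).image (fun a => a :: l)

lemma mem_P_succ {q : List ℕ} {m : ℕ} :
    q ∈ c.P (m+1) ↔ ∃ l ∈ c.P m, ∃ a < (c.chl l).card, q = a :: l := by
  simp only [P, Finset.mem_biUnion]
  constructor
  · rintro ⟨l, hl, hq⟩
    obtain ⟨a, ha, rfl⟩ := Finset.mem_image.1 hq
    exact ⟨l, hl, a, Finset.mem_range.1 ha, rfl⟩
  · rintro ⟨l, hl, a, ha, rfl⟩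
    exact ⟨l, hl, Finset.mem_image.2 ⟨a, Finset.mem_range.2 ha, rfl⟩⟩

/-- total mass of the children of a node -/
def T (l : List ℕ) : ℝ := ∑ n ∈ c.chl l, c.mass n

/-- the weight of a node -/
def w : List ℕ → ℝ
  | [] => 1
  | a :: l => w l * (c.mass (sel (c.chl l) a) / c.T l)

/-- the (closed) ball of a node -/
def bal (l : List ℕ) : Set (Fin k → ℝ) := closedBall (c.ctr l) (c.rad l)

/-- the basic "good node" invariant -/
def Good (l : List ℕ) : Prop := c.ctr l ∈ c.S ∧ 0 < c.rad l ∧ c.rad l ≤ c.ρ₀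

lemma good_root : c.Good [] := ⟨c.hy₀, c.ρ₀_pos, le_refl _⟩

lemma chl_spec {l : List ℕ} (h : c.Good l) :
    (∀ n ∈ c.chl l, l.length + 1 ≤ n ∧ c.r n ≤ c.εfun (c.rad l) ∧ c.r n ≤ c.rad l/4 ∧
        closedBall (c.x n) (c.r n) ⊆ c.bal l) ∧
      (((c.chl l : Finset ℕ) : Set ℕ).PairwiseDisjoint
        fun n => closedBall (c.x n) (4 * c.r n)) ∧
      c.κ * c.rad l ^ c.δ ≤ c.T l :=
  c.childF_spec h.1 h.2.1 h.2.2 _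

lemma good_child {l : List ℕ} (h : c.Good l) {a : ℕ} (ha : a < (c.chl l).card) :
    c.Good (a :: l) := by
  have hmem := sel_mem ha
  have hspec := (c.chl_spec h).1 _ hmem
  set n := sel (c.chl l) a with hn
  have hrn : 0 < c.r n := c.hrpos n
  have hr1 : c.r n ≤ 1 := by
    have h4 : c.r n ≤ c.rad l / 4 := hspec.2.2.1
    have := h.2.2
    have := c.ρ₀_le_one
    linarith
  have hradpos : 0 < c.r n ^ c.t := Real.rpow_pos_of_pos hrn _
  have hrt : c.r n ^ c.t ≤ c.r n := by
    calc c.r n ^ c.t ≤ c.r n ^ (1:ℝ) :=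
          Real.rpow_le_rpow_of_exponent_ge hrn hr1 c.ht
      _ = c.r n := Real.rpow_one _
  refine ⟨c.hxS n, ?_, ?_⟩
  · rw [rad_cons]; exact hradpos
  · rw [rad_cons, ← hn]
    have h4 : c.r n ≤ c.rad l / 4 := hspec.2.2.1
    have := h.2.2
    have := c.ρ₀_pos
    linarith

lemma good_mem : ∀ (m : ℕ), ∀ l ∈ c.P m, c.Good l ∧ l.length = m := by
  intro m
  induction m with
  | zero =>
    intro l hl
    simp only [P, Finset.mem_singleton] at hl
    subst hl
    exact ⟨c.good_root, rfl⟩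
  | succ m ih =>
    intro q hq
    obtain ⟨l, hl, a, ha, rfl⟩ := c.mem_P_succ.1 hq
    obtain ⟨hg, hlen⟩ := ih l hl
    exact ⟨c.good_child hg ha, by simp [hlen]⟩

lemma r_lt_r₀_of_chl {l : List ℕ} (h : c.Good l) {n : ℕ} (hn : n ∈ c.chl l) :
    c.r n < c.r₀ := by
  have h4 : c.r n ≤ c.rad l / 4 := ((c.chl_spec h).1 n hn).2.2.1
  have h1 := h.2.2
  have h2 := c.ρ₀_le
  have h3 := c.hr₀
  linarith

lemma T_pos {l : List ℕ} (h : c.Good l) : 0 < c.T l := by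
  have := (c.chl_spec h).2.2
  have hκ : 0 < c.κ * c.rad l ^ c.δ := mul_pos c.κ_pos (Real.rpow_pos_of_pos h.2.1 _)
  linarith

lemma chl_nonempty {l : List ℕ} (h : c.Good l) : 0 < (c.chl l).card := by
  rcases Finset.eq_empty_or_nonempty (c.chl l) with he | hne
  · exfalso
    have := c.T_pos h
    rw [T, he, Finset.sum_empty] at this
    exact lt_irrefl _ this
  · exact Finset.card_pos.2 hne

lemma w_pos : ∀ m, ∀ l ∈ c.P m, 0 < c.w l := by
  intro m
  induction m with
  | zero =>
    intro l hl
    simp only [P, Finset.mem_singleton] at hl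
    subst hl
    norm_num [w]
  | succ m ih =>
    intro q hq
    obtain ⟨l, hl, a, ha, rfl⟩ := c.mem_P_succ.1 hq
    have hg := (c.good_mem m l hl).1
    have hmass := c.mass_pos (c.r_lt_r₀_of_chl hg (sel_mem ha))
    have hT := c.T_pos hg
    rw [w]
    exact mul_pos (ih l hl) (div_pos hmass hT)

lemma sum_children_w {l : List ℕ} (h : c.Good l) :
    ∑ a ∈ Finset.range (c.chl l).card, c.w (a :: l) = c.w l := by
  have hT := c.T_pos h
  have hsum : ∑ a ∈ Finset.range (c.chl l).card, c.mass (sel (c.chl l) a) = c.T l := by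
    rw [T]
    apply Finset.sum_nbij' (fun a => sel (c.chl l) a) (fun n => (c.chl l).sort (·≤·) |>.idxOf n)
    · intro a ha
      exact sel_mem (Finset.mem_range.1 ha)
    · intro n hn
      rw [Finset.mem_range]
      rw [← Finset.length_sort (α := ℕ) (·≤·)]
      apply List.idxOf_lt_length_iff.2
      rw [Finset.mem_sort]
      exact hn
    · intro a ha
      rw [Finset.mem_range] at ha
      rw [sel, List.getD_eq_getElem _ _ (by rw [Finset.length_sort]; exact ha)]
      exact List.get_idxOf (Finset.sort_nodup _ _) _
    · intro n hn
      rw [sel, List.getD_eq_getElem _ _ (by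
          apply List.idxOf_lt_length_iff.2
          rw [Finset.mem_sort]
          exact hn)]
      exact List.idxOf_get _
    · intro a ha
      rfl
  calc ∑ a ∈ Finset.range (c.chl l).card, c.w (a :: l)
      = ∑ a ∈ Finset.range (c.chl l).card, c.w l * (c.mass (sel (c.chl l) a) / c.T l) := by
        apply Finset.sum_congr rfl
        intro a _
        rw [w]
    _ = c.w l * ((∑ a ∈ Finset.range (c.chl l).card, c.mass (sel (c.chl l) a)) / c.T l) := by
        rw [← Finset.mul_sum, ← Finset.sum_div]
    _ = c.w l := by rw [hsum, div_self hT.ne', mul_one]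

/-- suffixes of valid nodes are valid -/
lemma suffix_mem : ∀ (m' m : ℕ) (q : List ℕ), q ∈ c.P (m + m') → ∀ l, l <:+ q →
    l.length = m → l ∈ c.P m := by
  intro m'
  induction m' with
  | zero =>
    intro m q hq l hsuf hlen
    have := (c.good_mem m q hq).2
    rwa [(List.IsSuffix.eq_of_length hsuf (by rw [hlen, this]))]
  | succ m' ih =>
    intro m q hq l hsuf hlen
    obtain ⟨p, hp, a, ha, rfl⟩ := c.mem_P_succ.1 (show q ∈ c.P ((m + m') + 1) by
      rw [Nat.add_succ] at hq; exact hq)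
    rcases List.suffix_cons_iff.1 hsuf with h1 | h2
    · have hlen2 := (c.good_mem _ _ hq).2
      rw [h1]
      rw [h1] at hlen
      simp only [List.length_cons] at hlen
      have hplen := (c.good_mem _ _ hp).2
      omega
    · exact ih m p hp l h2 hlen

/-- descendants of a node at a given depth -/
def desc (l : List ℕ) (j : ℕ) : Finset (List ℕ) :=
  (c.P j).filter (fun q => l <:+ q)

lemma ball_mono_child {l : List ℕ} (h : c.Good l) {a : ℕ} (ha : a < (c.chl l).card) :
    c.bal (a :: l) ⊆ c.bal l := by
  have hmem := sel_mem ha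
  have hspec := (c.chl_spec h).1 _ hmem
  set n := sel (c.chl l) a with hn
  have h1 : c.bal (a :: l) ⊆ closedBall (c.x n) (c.r n) := by
    rw [bal, ctr_cons, rad_cons, ← hn]
    apply closedBall_subset_closedBall
    have hr1 : c.r n ≤ 1 := by
      have h4 : c.r n ≤ c.rad l / 4 := hspec.2.2.1
      have := h.2.2
      have := c.ρ₀_le_one
      linarith
    calc c.r n ^ c.t ≤ c.r n ^ (1:ℝ) :=
          Real.rpow_le_rpow_of_exponent_ge (c.hrpos n) hr1 c.ht
      _ = c.r n := Real.rpow_one _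
  exact h1.trans hspec.2.2.2

lemma ball_mono_desc : ∀ (m' m : ℕ) (l : List ℕ), l ∈ c.P m → ∀ q ∈ c.desc l (m + m'),
    c.bal q ⊆ c.bal l := by
  intro m'
  induction m' with
  | zero =>
    intro m l hl q hq
    rw [desc, Finset.mem_filter] at hq
    have h1 := (c.good_mem _ _ hq.1).2
    have h2 := (c.good_mem _ _ hl).2
    rw [List.IsSuffix.eq_of_length hq.2 (by rw [h2, h1]; omega)]
  | succ m' ih =>
    intro m l hl q hq
    rw [desc, Finset.mem_filter] at hq
    obtain ⟨p, hp, a, ha, rfl⟩ := c.mem_P_succ.1 (show q ∈ c.P ((m + m') + 1) by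
      rw [Nat.add_succ] at hq; exact hq.1)
    rcases List.suffix_cons_iff.1 hq.2 with h1 | h2
    · rw [← h1]
    · have hgp := (c.good_mem _ _ hp).1
      exact (c.ball_mono_child hgp ha).trans
        (ih m l hl p (by rw [desc, Finset.mem_filter]; exact ⟨hp, h2⟩))

/-- normalizing constant for weights -/
def Cw : ℝ := c.ρ₀ ^ (-c.s)

lemma Cw_pos : 0 < c.Cw := Real.rpow_pos_of_pos c.ρ₀_pos _

/-- the fundamental weight bound `w l ≤ Cw · rad l ^ s` -/
lemma w_le : ∀ m, ∀ l ∈ c.P m, c.w l ≤ c.Cw * c.rad l ^ c.s := by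
  intro m
  induction m with
  | zero =>
    intro l hl
    simp only [P, Finset.mem_singleton] at hl
    subst hl
    have : c.rad [] = c.ρ₀ := rfl
    rw [w, this, Cw, ← Real.rpow_add c.ρ₀_pos]
    rw [neg_add_cancel, Real.rpow_zero]
  | succ m ih =>
    intro q hq
    obtain ⟨l, hl, a, ha, rfl⟩ := c.mem_P_succ.1 hq
    have hg := (c.good_mem m l hl).1
    have hmem := sel_mem ha
    have hspec := (c.chl_spec hg).1 _ hmem
    set n := sel (c.chl l) a with hn
    have hrn := c.hrpos n
    have hrad := hg.2.1
    have hT := c.T_pos hg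
    have hTlow := (c.chl_spec hg).2.2
    have hmass : c.mass n ≤ c.c₂ * c.r n ^ c.δ := c.mass_upper (c.r_lt_r₀_of_chl hg hmem)
    -- key: c₂ r^δ ≤ κ rad^(δ-s) r^(ts)
    have hkey : c.c₂ * c.r n ^ c.δ ≤ c.κ * c.rad l ^ (c.δ - c.s) * c.r n ^ (c.t * c.s) := by
      have h1 : c.c₂ * c.r n ^ (c.δ - c.s * c.t) ≤ c.κ * c.rad l ^ (c.δ - c.s) :=
        c.εfun_spec hrad hrn hspec.2.1
      have h2 : c.r n ^ c.δ = c.r n ^ (c.δ - c.s * c.t) * c.r n ^ (c.t * c.s) := by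
        rw [← Real.rpow_add hrn]
        congr 1
        ring
      rw [h2, ← mul_assoc]
      apply mul_le_mul_of_nonneg_right h1 (Real.rpow_pos_of_pos hrn _).le
    have hwl := ih l hl
    have hwpos := c.w_pos m l hl
    rw [w, rad_cons, ← hn]
    have hrts : (c.r n ^ c.t) ^ c.s = c.r n ^ (c.t * c.s) := by
      rw [← Real.rpow_mul hrn.le]
    rw [hrts]
    have hTbound : c.mass n / c.T l ≤
        (c.κ * c.rad l ^ (c.δ - c.s) * c.r n ^ (c.t * c.s)) / (c.κ * c.rad l ^ c.δ) := by
      apply div_le_div₀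
      · exact mul_nonneg (mul_nonneg c.κ_pos.le (Real.rpow_pos_of_pos hrad _).le)
          (Real.rpow_pos_of_pos hrn _).le
      · exact hmass.trans hkey
      · exact mul_pos c.κ_pos (Real.rpow_pos_of_pos hrad _)
      · exact hTlow
    have hsimp : (c.κ * c.rad l ^ (c.δ - c.s) * c.r n ^ (c.t * c.s)) / (c.κ * c.rad l ^ c.δ)
        = c.r n ^ (c.t * c.s) / c.rad l ^ c.s := by
      have hδs : c.rad l ^ c.δ = c.rad l ^ (c.δ - c.s) * c.rad l ^ c.s := by
        rw [← Real.rpow_add hrad]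
        ring_nf
      rw [hδs, show c.κ * (c.rad l ^ (c.δ - c.s) * c.rad l ^ c.s)
        = (c.κ * c.rad l ^ (c.δ - c.s)) * c.rad l ^ c.s by ring]
      exact mul_div_mul_left _ _
        (mul_pos c.κ_pos (Real.rpow_pos_of_pos hrad _)).ne' 
    rw [hsimp] at hTbound
    have hmassnn : 0 ≤ c.mass n := (c.mass_pos (c.r_lt_r₀_of_chl hg hmem)).le
    calc c.w l * (c.mass n / c.T l)
        ≤ (c.Cw * c.rad l ^ c.s) * (c.r n ^ (c.t * c.s) / c.rad l ^ c.s) :=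
          mul_le_mul hwl hTbound (div_nonneg hmassnn hT.le)
            (mul_nonneg c.Cw_pos.le (Real.rpow_pos_of_pos hrad _).le)
      _ = c.Cw * c.r n ^ (c.t * c.s) := by
          have hne : (c.rad l ^ c.s) ≠ 0 := (Real.rpow_pos_of_pos hrad _).ne'
          field_simp

/-- radius decay with the level -/
lemma rad_le_level : ∀ m, ∀ l ∈ c.P m, c.rad l ≤ c.ρ₀ * (4⁻¹ : ℝ) ^ m := by
  intro m
  induction m with
  | zero =>
    intro l hl
    simp only [P, Finset.mem_singleton] at hl
    subst hl
    simp [show c.rad [] = c.ρ₀ from rfl]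
  | succ m ih =>
    intro q hq
    obtain ⟨l, hl, a, ha, rfl⟩ := c.mem_P_succ.1 hq
    have hg := (c.good_mem m l hl).1
    have hmem := sel_mem ha
    have hspec := (c.chl_spec hg).1 _ hmem
    set n := sel (c.chl l) a with hn
    have hrn := c.hrpos n
    have hr1 : c.r n ≤ 1 := by
      have h4 : c.r n ≤ c.rad l / 4 := hspec.2.2.1
      have := hg.2.2
      have := c.ρ₀_le_one
      linarith
    have hrt : c.r n ^ c.t ≤ c.r n := by
      calc c.r n ^ c.t ≤ c.r n ^ (1:ℝ) :=
            Real.rpow_le_rpow_of_exponent_ge hrn hr1 c.ht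
        _ = c.r n := Real.rpow_one _
    have h4 : c.r n ≤ c.rad l / 4 := hspec.2.2.1
    have := ih l hl
    rw [rad_cons, ← hn, pow_succ]
    calc c.r n ^ c.t ≤ c.rad l / 4 := hrt.trans h4
      _ ≤ c.ρ₀ * (4⁻¹:ℝ) ^ m / 4 := by linarith
      _ = c.ρ₀ * ((4⁻¹:ℝ) ^ m * 4⁻¹) := by ring

/-- indices of nodes grow with the level -/
lemma idx_ge : ∀ m, ∀ l ∈ c.P (m+1), ∃ n : ℕ, m + 1 ≤ n ∧
    c.ctr l = c.x n ∧ c.rad l = c.r n ^ c.t := by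
  intro m q hq
  obtain ⟨l, hl, a, ha, rfl⟩ := c.mem_P_succ.1 hq
  have hg := (c.good_mem m l hl).1
  have hmem := sel_mem ha
  have hspec := (c.chl_spec hg).1 _ hmem
  refine ⟨sel (c.chl l) a, ?_, ctr_cons .., rad_cons ..⟩
  have hlen := (c.good_mem m l hl).2
  have := hspec.1
  omega

/-- a suffix of given length is determined -/
lemma suffix_eq_suffix {l₁ l₂ q : List ℕ} (h₁ : l₁ <:+ q) (h₂ : l₂ <:+ q)
    (hlen : l₁.length = l₂.length) : l₁ = l₂ := by
  obtain ⟨p₁, rfl⟩ := h₁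
  obtain ⟨p₂, hp₂⟩ := h₂
  have hl : p₁.length = p₂.length := by
    have := congrArg List.length hp₂
    simp only [List.length_append] at this
    omega
  have h3 := congrArg (List.drop p₂.length) hp₂
  rw [List.drop_left] at h3
  rw [← hl, List.drop_left] at h3
  exact h3.symm

lemma exists_cons_suffix {l q : List ℕ} (h : l <:+ q) (hlen : l.length < q.length) :
    ∃ a, a :: l <:+ q := by
  obtain ⟨pre, rfl⟩ := h
  have hpre : pre ≠ [] := by
    intro hp
    rw [hp] at hlen
    simp at hlen
  clear hlen
  induction pre with
  | nil => exact absurd rfl hpre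
  | cons hd tl ih =>
    rcases List.eq_nil_or_concat tl.reverse with h1 | h1
    · have : tl = [] := by simpa using congrArg List.reverse h1
      subst this
      exact ⟨hd, by simp⟩
    · rcases tl with _ | ⟨a, tl'⟩
      · exact ⟨hd, by simp⟩
      · obtain ⟨b, hb⟩ := ih (by simp)
        exact ⟨b, hb.trans (by simp [List.suffix_cons_iff, List.suffix_refl])⟩

lemma desc_succ {m : ℕ} {l : List ℕ} (hl : l ∈ c.P m) (m' : ℕ) :
    c.desc l (m + (m'+1)) = (Finset.range (c.chl l).card).biUnion
      (fun a => c.desc (a :: l) ((m+1) + m')) := by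
  have hllen := (c.good_mem m l hl).2
  apply Finset.ext
  intro q
  simp only [desc, Finset.mem_filter, Finset.mem_biUnion, Finset.mem_range]
  constructor
  · rintro ⟨hq, hsuf⟩
    have hqlen := (c.good_mem _ _ hq).2
    obtain ⟨a, hacons⟩ := exists_cons_suffix hsuf (by rw [hllen, hqlen]; omega)
    have hmem : (a :: l) ∈ c.P (m+1) := by
      apply c.suffix_mem m' (m+1) q (by rwa [show m+1+m' = m+(m'+1) by omega]) _ hacons
      simp [hllen]
    obtain ⟨l', hl', a', ha', heq⟩ := c.mem_P_succ.1 hmem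
    have ha2 : a = a' ∧ l = l' := List.cons.inj heq
    refine ⟨a, ?_, by rwa [show m+1+m' = m+(m'+1) by omega], hacons⟩
    rw [ha2.1, ha2.2]
    exact ha'
  · rintro ⟨a, ha, hq, hsuf⟩
    exact ⟨by rwa [show m+1+m' = m+(m'+1) by omega] at hq,
      (List.suffix_cons a l).trans hsuf⟩

lemma desc_disjoint (l : List ℕ) (j : ℕ) :
    Set.PairwiseDisjoint ↑(Finset.range (c.chl l).card)
      (fun a => c.desc (a :: l) j) := by
  intro a _ b _ hab
  apply Finset.disjoint_left.2
  intro q hqa hqb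
  simp only [desc, Finset.mem_filter] at hqa hqb
  exact hab (by
    have h5 := suffix_eq_suffix hqa.2 hqb.2 (by simp)
    exact (List.cons.inj h5).1)

/-- sum of descendant weights -/
lemma sum_desc : ∀ (m' m : ℕ), ∀ l ∈ c.P m, ∑ q ∈ c.desc l (m + m'), c.w q = c.w l := by
  intro m'
  induction m' with
  | zero =>
    intro m l hl
    have hset : c.desc l (m + 0) = {l} := by
      apply Finset.ext
      intro q
      rw [desc, Finset.mem_filter, Finset.mem_singleton]
      constructor
      · rintro ⟨hq, hsuf⟩
        exact (List.IsSuffix.eq_of_length hsuf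
          (by rw [(c.good_mem _ _ hl).2, (c.good_mem _ _ hq).2]; omega)).symm
      · rintro rfl
        exact ⟨by simp only [Nat.add_zero]; exact hl, List.suffix_refl _⟩
    rw [hset, Finset.sum_singleton]
  | succ m' ih =>
    intro m l hl
    have hg := (c.good_mem m l hl).1
    rw [c.desc_succ hl m', Finset.sum_biUnion (c.desc_disjoint l _)]
    calc ∑ a ∈ Finset.range (c.chl l).card, ∑ q ∈ c.desc (a :: l) ((m+1) + m'), c.w q
        = ∑ a ∈ Finset.range (c.chl l).card, c.w (a :: l) := by
          apply Finset.sum_congr rfl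
          intro a ha
          rw [Finset.mem_range] at ha
          exact ih (m+1) (a :: l) (c.mem_P_succ.2 ⟨l, hl, a, ha, rfl⟩)
      _ = c.w l := c.sum_children_w hg

end Cfg

/-- in a real normed space, disjoint closed balls have distant centers -/
lemma add_lt_dist_of_disjoint {X : Type*} [NormedAddCommGroup X] [NormedSpace ℝ X]
    {x y : X} {a b : ℝ} (ha : 0 < a) (hb : 0 < b)
    (h : Disjoint (closedBall x a) (closedBall y b)) : a + b < dist x y := by
  by_contra hle
  push_neg at hle
  set q := x + (a/(a+b)) • (y - x) with hq
  have hab : 0 < a + b := by linarith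
  have hq1 : q ∈ closedBall x a := by
    rw [mem_closedBall, dist_eq_norm, hq]
    have : x + (a/(a+b)) • (y - x) - x = (a/(a+b)) • (y - x) := by abel
    rw [this, norm_smul]
    rw [Real.norm_eq_abs, abs_of_nonneg (by positivity)]
    calc a/(a+b) * ‖y - x‖ ≤ a/(a+b) * (a+b) := by
          apply mul_le_mul_of_nonneg_left _ (by positivity)
          rw [← dist_eq_norm, dist_comm]
          exact hle
      _ = a := by field_simp
  have hq2 : q ∈ closedBall y b := by
    rw [mem_closedBall, dist_eq_norm, hq]
    have h2 : x + (a/(a+b)) • (y - x) - y = (1 - a/(a+b)) • (x - y) := by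
      rw [sub_smul, one_smul, smul_sub]
      module
    rw [h2, norm_smul, Real.norm_eq_abs]
    have h3 : 1 - a/(a+b) = b/(a+b) := by field_simp; ring
    rw [h3, abs_of_nonneg (by positivity)]
    calc b/(a+b) * ‖x - y‖ ≤ b/(a+b) * (a+b) := by
          apply mul_le_mul_of_nonneg_left _ (by positivity)
          rw [← dist_eq_norm]
          exact hle
      _ = b := by field_simp
  exact Set.disjoint_left.1 h hq1 hq2

/-- in `ℝ^k`, `k > 0`, a closed ball inside a closed ball has smaller radius -/
lemma radius_le_of_subset {k : ℕ} (hk : 0 < k) {y z : Fin k → ℝ} {ρ τ : ℝ}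
    (hρ : 0 ≤ ρ) (hτ : 0 ≤ τ) (h : closedBall y ρ ⊆ closedBall z τ) : ρ ≤ τ := by
  haveI : Nonempty (Fin k) := ⟨⟨0, hk⟩⟩
  set e : Fin k → ℝ := fun _ => (1:ℝ) with he
  have hne : ‖e‖ = 1 := by
    rw [he, pi_norm_const (1:ℝ), norm_one]
  have h1 : y + ρ • e ∈ closedBall y ρ := by
    rw [mem_closedBall, dist_eq_norm]
    have : y + ρ • e - y = ρ • e := by abel
    rw [this, norm_smul, hne, Real.norm_eq_abs, abs_of_nonneg hρ, mul_one]
  have h2 : y - ρ • e ∈ closedBall y ρ := by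
    rw [mem_closedBall, dist_eq_norm]
    have : y - ρ • e - y = -(ρ • e) := by abel
    rw [this, norm_neg, norm_smul, hne, Real.norm_eq_abs, abs_of_nonneg hρ, mul_one]
  have hd : dist (y + ρ • e) (y - ρ • e) = 2 * ρ := by
    rw [dist_eq_norm]
    have : y + ρ • e - (y - ρ • e) = (2 * ρ) • e := by
      rw [two_mul, add_smul]
      abel
    rw [this, norm_smul, hne, Real.norm_eq_abs, abs_of_nonneg (by linarith), mul_one]
  have hb := Metric.dist_le_diam_of_mem (Metric.isBounded_closedBall (x := z) (r := τ))
    (h h1) (h h2)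
  have hdiam := Metric.diam_closedBall (x := z) hτ
  rw [hd] at hb
  linarith [hb.trans hdiam]

namespace Cfg

/-- the scale up to which the main estimate works -/
def τb : ℝ := min c.ρ₀ (c.r₀/6)

lemma τb_pos : 0 < c.τb := lt_min c.ρ₀_pos (by have := c.hr₀; linarith)

/-- the constant in the main estimate -/
def C₅ : ℝ := c.Cw * (1 + c.c₂ * (5:ℝ) ^ c.δ / c.κ)

lemma C₅_pos : 0 < c.C₅ := by
  have h5 : (0:ℝ) < (5:ℝ) ^ c.δ := Real.rpow_pos_of_pos (by norm_num) _
  have := c.Cw_pos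
  have := c.hc₂
  have := c.κ_pos
  unfold C₅
  positivity

lemma r_le_one_of_chl {l : List ℕ} (h : c.Good l) {n : ℕ} (hn : n ∈ c.chl l) :
    c.r n ≤ 1 := by
  have h4 : c.r n ≤ c.rad l / 4 := ((c.chl_spec h).1 n hn).2.2.1
  have := h.2.2
  have := c.ρ₀_le_one
  linarith

lemma rt_le_r {n : ℕ} (h1 : c.r n ≤ 1) : c.r n ^ c.t ≤ c.r n := by
  calc c.r n ^ c.t ≤ c.r n ^ (1:ℝ) :=
        Real.rpow_le_rpow_of_exponent_ge (c.hrpos n) h1 c.ht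
    _ = c.r n := Real.rpow_one _

lemma bal_nonempty {j : ℕ} {q : List ℕ} (hq : q ∈ c.P j) : c.ctr q ∈ c.bal q :=
  mem_closedBall_self (c.good_mem j q hq).1.2.1.le

lemma Cw_le_C₅ : c.Cw ≤ c.C₅ := by
  have h5 : (0:ℝ) < (5:ℝ) ^ c.δ := Real.rpow_pos_of_pos (by norm_num) _
  have h1 : (1:ℝ) ≤ 1 + c.c₂ * (5:ℝ) ^ c.δ / c.κ := by
    have := c.hc₂
    have := c.κ_pos
    have : 0 < c.c₂ * (5:ℝ) ^ c.δ / c.κ := by positivity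
    linarith
  calc c.Cw = c.Cw * 1 := (mul_one _).symm
    _ ≤ c.C₅ := mul_le_mul_of_nonneg_left h1 c.Cw_pos.le

open Classical in
/-- **The main estimate**: the total weight of level-`m+m'` descendants of a node whose
balls are contained in a ball of radius `τ` is at most `C₅ τ^s`. -/
lemma main_est : ∀ (m' m : ℕ), ∀ l ∈ c.P m, ∀ (z : Fin k → ℝ) (τ : ℝ), 0 < τ → τ ≤ c.τb →
    ∑ q ∈ (c.desc l (m + m')).filter (fun q => c.bal q ⊆ closedBall z τ), c.w q
      ≤ c.C₅ * τ ^ c.s := by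
  intro m'
  have hrhs : ∀ τ : ℝ, 0 < τ → (0:ℝ) ≤ c.C₅ * τ ^ c.s :=
    fun τ hτ => mul_nonneg c.C₅_pos.le (Real.rpow_pos_of_pos hτ _).le
  have hCw_case : ∀ (ρ τ : ℝ), 0 < ρ → ρ ≤ τ → 0 < τ → c.Cw * ρ ^ c.s ≤ c.C₅ * τ ^ c.s := by
    intro ρ τ hρ hρτ hτ
    calc c.Cw * ρ ^ c.s ≤ c.Cw * τ ^ c.s :=
          mul_le_mul_of_nonneg_left (Real.rpow_le_rpow hρ.le hρτ c.hs.le) c.Cw_pos.le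
      _ ≤ c.C₅ * τ ^ c.s :=
          mul_le_mul_of_nonneg_right c.Cw_le_C₅ (Real.rpow_pos_of_pos hτ _).le
  induction m' with
  | zero =>
    intro m l hl z τ hτ0 hτb
    have hset : c.desc l (m + 0) = {l} := by
      apply Finset.ext
      intro q
      rw [desc, Finset.mem_filter, Finset.mem_singleton]
      constructor
      · rintro ⟨hq, hsuf⟩
        exact (List.IsSuffix.eq_of_length hsuf
          (by rw [(c.good_mem _ _ hl).2, (c.good_mem _ _ hq).2]; omega)).symm
      · rintro rfl
        exact ⟨by simp only [Nat.add_zero]; exact hl, List.suffix_refl _⟩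
    rw [hset, Finset.filter_singleton]
    split_ifs with hsub
    · rw [Finset.sum_singleton]
      have hg := (c.good_mem m l hl).1
      have hradτ : c.rad l ≤ τ :=
        radius_le_of_subset c.hk hg.2.1.le hτ0.le hsub
      exact (c.w_le m l hl).trans (hCw_case _ _ hg.2.1 hradτ hτ0)
    · rw [Finset.sum_empty]
      exact hrhs τ hτ0
  | succ m' ih =>
    intro m l hl z τ hτ0 hτb
    have hg := (c.good_mem m l hl).1
    by_cases hτrad : c.rad l ≤ τ
    · -- trivial bound by the total weight of the node
      calc ∑ q ∈ (c.desc l (m + (m'+1))).filter (fun q => c.bal q ⊆ closedBall z τ), c.w q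
          ≤ ∑ q ∈ c.desc l (m + (m'+1)), c.w q := by
            apply Finset.sum_le_sum_of_subset_of_nonneg (Finset.filter_subset _ _)
            intro q hq _
            simp only [desc, Finset.mem_filter] at hq
            exact (c.w_pos _ q hq.1).le
        _ = c.w l := c.sum_desc (m'+1) m l hl
        _ ≤ c.Cw * c.rad l ^ c.s := c.w_le m l hl
        _ ≤ c.C₅ * τ ^ c.s := hCw_case _ _ hg.2.1 hτrad hτ0
    push_neg at hτrad
    -- decompose into children
    have hdisj : Set.PairwiseDisjoint ↑(Finset.range (c.chl l).card)
        (fun a => (c.desc (a :: l) ((m+1)+m')).filter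
          (fun q => c.bal q ⊆ closedBall z τ)) := by
      intro a ha b hb hab
      exact Finset.disjoint_filter_filter (c.desc_disjoint l ((m+1)+m') ha hb hab)
    rw [c.desc_succ hl m', Finset.filter_biUnion, Finset.sum_biUnion hdisj]
    -- the set of children whose ball meets the target ball
    set M : Finset ℕ := (Finset.range (c.chl l).card).filter
      (fun a => (c.bal (a :: l) ∩ closedBall z τ).Nonempty) with hM
    have hMsub : ∀ a ∈ M, a < (c.chl l).card := fun a ha =>
      Finset.mem_range.1 (Finset.mem_filter.1 ha).1
    have hMmeet : ∀ a ∈ M, (c.bal (a :: l) ∩ closedBall z τ).Nonempty := fun a ha =>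
      (Finset.mem_filter.1 ha).2
    have hchild_mem : ∀ a, a < (c.chl l).card → (a :: l) ∈ c.P (m+1) :=
      fun a ha => c.mem_P_succ.2 ⟨l, hl, a, ha, rfl⟩
    have hSzero : ∀ a ∈ Finset.range (c.chl l).card, a ∉ M →
        ∑ q ∈ (c.desc (a :: l) ((m+1)+m')).filter (fun q => c.bal q ⊆ closedBall z τ),
          c.w q = 0 := by
      intro a ha hna
      rw [Finset.mem_range] at ha
      apply Finset.sum_eq_zero
      intro q hq
      exfalso
      rw [Finset.mem_filter] at hq
      have hqP : q ∈ c.P ((m+1)+m') := by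
        have := hq.1
        simp only [desc, Finset.mem_filter] at this
        exact this.1
      have hballq : c.bal q ⊆ c.bal (a :: l) :=
        c.ball_mono_desc m' (m+1) (a :: l) (hchild_mem a ha) q hq.1
      have hc : c.ctr q ∈ c.bal (a :: l) ∩ closedBall z τ :=
        ⟨hballq (c.bal_nonempty hqP), hq.2 (c.bal_nonempty hqP)⟩
      exact hna (Finset.mem_filter.2 ⟨Finset.mem_range.2 ha, ⟨_, hc⟩⟩)
    have hsum_eq : ∑ a ∈ Finset.range (c.chl l).card,
        ∑ q ∈ (c.desc (a :: l) ((m+1)+m')).filter (fun q => c.bal q ⊆ closedBall z τ), c.w q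
        = ∑ a ∈ M,
        ∑ q ∈ (c.desc (a :: l) ((m+1)+m')).filter (fun q => c.bal q ⊆ closedBall z τ),
          c.w q :=
      (Finset.sum_subset (Finset.filter_subset _ _) (fun a ha hna => hSzero a ha hna)).symm
    rw [hsum_eq]
    rcases Nat.lt_or_ge M.card 2 with hM1 | hM2
    · -- at most one child meets the target ball
      rcases Finset.eq_empty_or_nonempty M with he | hne
      · rw [he, Finset.sum_empty]
        exact hrhs τ hτ0
      · have hcard : M.card = 1 := le_antisymm (by omega) (Finset.card_pos.2 hne)
        obtain ⟨a, heq⟩ := Finset.card_eq_one.1 hcard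
        rw [heq, Finset.sum_singleton]
        have haM : a ∈ M := by rw [heq]; exact Finset.mem_singleton_self a
        have ha : a < (c.chl l).card := hMsub a haM
        exact ih (m+1) (a :: l) (hchild_mem a ha) z τ hτ0 hτb
    · -- at least two children meet the target ball: use the measure estimate
      have hdistz : ∀ a ∈ M, dist (c.x (sel (c.chl l) a)) z ≤ c.r (sel (c.chl l) a) + τ := by
        intro a ha
        obtain ⟨p, hp1, hp2⟩ := hMmeet a ha
        rw [bal, ctr_cons, rad_cons] at hp1
        have h1 : dist p (c.x (sel (c.chl l) a)) ≤ c.r (sel (c.chl l) a) ^ c.t :=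
          mem_closedBall.1 hp1
        have h2 : dist p z ≤ τ := mem_closedBall.1 hp2
        have h3 : c.r (sel (c.chl l) a) ^ c.t ≤ c.r (sel (c.chl l) a) :=
          c.rt_le_r (c.r_le_one_of_chl hg (sel_mem (hMsub a ha)))
        calc dist (c.x (sel (c.chl l) a)) z
            ≤ dist (c.x (sel (c.chl l) a)) p + dist p z := dist_triangle _ _ _
          _ ≤ c.r (sel (c.chl l) a) + τ := by
              rw [dist_comm (c.x (sel (c.chl l) a)) p]
              linarith
      have hrτ : ∀ a ∈ M, c.r (sel (c.chl l) a) ≤ τ := by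
        intro a ha
        obtain ⟨b, hb, hba⟩ := Finset.exists_mem_ne (show 1 < M.card by omega) a
        have hanb : sel (c.chl l) a ≠ sel (c.chl l) b := fun h =>
          hba (sel_inj (hMsub b hb) (hMsub a ha) h.symm)
        have hd : Disjoint (closedBall (c.x (sel (c.chl l) a)) (4 * c.r (sel (c.chl l) a)))
            (closedBall (c.x (sel (c.chl l) b)) (4 * c.r (sel (c.chl l) b))) :=
          (c.chl_spec hg).2.1 (sel_mem (hMsub a ha)) (sel_mem (hMsub b hb)) hanb
        have hra := c.hrpos (sel (c.chl l) a)
        have hrb := c.hrpos (sel (c.chl l) b)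
        have h1 := add_lt_dist_of_disjoint (by linarith) (by linarith) hd
        have h2 := hdistz a ha
        have h3 := hdistz b hb
        have h4 : dist (c.x (sel (c.chl l) a)) (c.x (sel (c.chl l) b)) ≤
            dist (c.x (sel (c.chl l) a)) z + dist (c.x (sel (c.chl l) b)) z := by
          rw [dist_comm (c.x (sel (c.chl l) b)) z]
          exact dist_triangle _ _ _
        linarith
      obtain ⟨a₀, ha₀⟩ : M.Nonempty := Finset.card_pos.1 (by omega)
      have hcont : ∀ a ∈ M, closedBall (c.x (sel (c.chl l) a)) (c.r (sel (c.chl l) a))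
          ⊆ closedBall (c.x (sel (c.chl l) a₀)) (5 * τ) := by
        intro a ha
        apply closedBall_subset_closedBall'
        have h1 := hdistz a ha
        have h2 := hdistz a₀ ha₀
        have h3 := hrτ a ha
        have h4 := hrτ a₀ ha₀
        have h5 : dist (c.x (sel (c.chl l) a)) (c.x (sel (c.chl l) a₀)) ≤
            dist (c.x (sel (c.chl l) a)) z + dist (c.x (sel (c.chl l) a₀)) z := by
          rw [dist_comm (c.x (sel (c.chl l) a₀)) z]
          exact dist_triangle _ _ _
        linarith
      -- measure estimate over the children meeting the ball
      set M' : Finset ℕ := M.image (fun a => sel (c.chl l) a) with hM'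
      have hM'sub : ∀ n ∈ M', n ∈ c.chl l := by
        intro n hn
        obtain ⟨a, ha, rfl⟩ := Finset.mem_image.1 hn
        exact sel_mem (hMsub a ha)
      have hsum_im : ∑ n ∈ M', c.mass n = ∑ a ∈ M, c.mass (sel (c.chl l) a) :=
        Finset.sum_image (fun a ha b hb h => sel_inj (hMsub a ha) (hMsub b hb) h)
      have hpd : Set.PairwiseDisjoint ↑M' (fun n => closedBall (c.x n) (c.r n)) := by
        intro p hp q hq hpq
        have h0 := (c.chl_spec hg).2.1 (hM'sub p hp) (hM'sub q hq) hpq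
        have hp1 : closedBall (c.x p) (c.r p) ⊆ closedBall (c.x p) (4 * c.r p) :=
          closedBall_subset_closedBall (by have := c.hrpos p; linarith)
        have hq1 : closedBall (c.x q) (c.r q) ⊆ closedBall (c.x q) (4 * c.r q) :=
          closedBall_subset_closedBall (by have := c.hrpos q; linarith)
        exact h0.mono hp1 hq1
      have h5τ : 5 * τ < c.r₀ := by
        have h6 : τ ≤ c.r₀/6 := hτb.trans (min_le_right _ _)
        have := c.hr₀
        linarith
      have hsumM : ∑ a ∈ M, c.mass (sel (c.chl l) a) ≤ c.c₂ * (5*τ) ^ c.δ := by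
        rw [← hsum_im]
        have hμuni : c.μ (⋃ n ∈ M', closedBall (c.x n) (c.r n))
            = ∑ n ∈ M', c.μ (closedBall (c.x n) (c.r n)) :=
          measure_biUnion_finset hpd (fun n _ => measurableSet_closedBall)
        have hsub2 : (⋃ n ∈ M', closedBall (c.x n) (c.r n))
            ⊆ closedBall (c.x (sel (c.chl l) a₀)) (5*τ) := by
          apply Set.iUnion₂_subset
          intro n hn
          obtain ⟨a, ha, rfl⟩ := Finset.mem_image.1 hn
          exact hcont a ha
        have hμball := (c.hreg (c.x (sel (c.chl l) a₀)) (c.hxS _) (5*τ)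
          (by linarith) h5τ).2
        have hchain : ∑ n ∈ M', c.μ (closedBall (c.x n) (c.r n))
            ≤ ENNReal.ofReal (c.c₂ * (5*τ) ^ c.δ) :=
          hμuni ▸ ((measure_mono hsub2).trans hμball)
        have hfin : ∀ n ∈ M', c.μ (closedBall (c.x n) (c.r n)) ≠ ⊤ := fun n _ => c.hμfin _
        have hmono := ENNReal.toReal_mono ENNReal.ofReal_ne_top hchain
        rw [ENNReal.toReal_sum hfin, ENNReal.toReal_ofReal (by
          have h7 : (0:ℝ) < (5*τ) ^ c.δ := Real.rpow_pos_of_pos (by linarith) _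
          have := c.hc₂
          positivity)] at hmono
        exact hmono
      -- weight chain
      have hTlow := (c.chl_spec hg).2.2
      have hT := c.T_pos hg
      have hwl := c.w_le m l hl
      have hwlpos := c.w_pos m l hl
      have hstep : ∀ a ∈ M,
          ∑ q ∈ (c.desc (a :: l) ((m+1)+m')).filter (fun q => c.bal q ⊆ closedBall z τ),
            c.w q ≤ (c.w l / c.T l) * c.mass (sel (c.chl l) a) := by
        intro a ha
        calc ∑ q ∈ (c.desc (a :: l) ((m+1)+m')).filter (fun q => c.bal q ⊆ closedBall z τ),
              c.w q
            ≤ ∑ q ∈ c.desc (a :: l) ((m+1)+m'), c.w q := by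
              apply Finset.sum_le_sum_of_subset_of_nonneg (Finset.filter_subset _ _)
              intro q hq _
              simp only [desc, Finset.mem_filter] at hq
              exact (c.w_pos _ q hq.1).le
          _ = c.w (a :: l) := c.sum_desc m' (m+1) (a :: l) (hchild_mem a (hMsub a ha))
          _ = (c.w l / c.T l) * c.mass (sel (c.chl l) a) := by
              rw [w]
              ring
      have hradpos := hg.2.1
      have hfrac : 0 ≤ c.w l / c.T l := (div_pos hwlpos hT).le
      calc ∑ a ∈ M,
            ∑ q ∈ (c.desc (a :: l) ((m+1)+m')).filter (fun q => c.bal q ⊆ closedBall z τ),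
              c.w q
          ≤ ∑ a ∈ M, (c.w l / c.T l) * c.mass (sel (c.chl l) a) := Finset.sum_le_sum hstep
        _ = (c.w l / c.T l) * ∑ a ∈ M, c.mass (sel (c.chl l) a) := by
            rw [Finset.mul_sum]
        _ ≤ (c.w l / c.T l) * (c.c₂ * (5*τ) ^ c.δ) :=
            mul_le_mul_of_nonneg_left hsumM hfrac
        _ ≤ ((c.Cw * c.rad l ^ c.s) / (c.κ * c.rad l ^ c.δ)) * (c.c₂ * (5*τ) ^ c.δ) := by
            apply mul_le_mul_of_nonneg_right _ (by
              have h7 : (0:ℝ) < (5*τ) ^ c.δ := Real.rpow_pos_of_pos (by linarith) _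
              have := c.hc₂
              positivity)
            apply div_le_div₀ (by
                have := c.Cw_pos
                have := (Real.rpow_pos_of_pos hradpos c.s)
                positivity)
              hwl (mul_pos c.κ_pos (Real.rpow_pos_of_pos hradpos _)) hTlow
        _ ≤ c.C₅ * τ ^ c.s := by
            have h5pos : (0:ℝ) < (5:ℝ) ^ c.δ := Real.rpow_pos_of_pos (by norm_num) _
            have hτs : (0:ℝ) < τ ^ c.s := Real.rpow_pos_of_pos hτ0 _
            have h5exp : (5*τ) ^ c.δ = 5 ^ c.δ * τ ^ c.δ :=
              Real.mul_rpow (by norm_num) hτ0.le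
            have hτδ : τ ^ c.δ ≤ c.rad l ^ (c.δ - c.s) * τ ^ c.s := by
              have h8 : τ ^ c.δ = τ ^ (c.δ - c.s) * τ ^ c.s := by
                rw [← Real.rpow_add hτ0]
                ring_nf
              rw [h8]
              apply mul_le_mul_of_nonneg_right _ hτs.le
              exact Real.rpow_le_rpow hτ0.le hτrad.le (by have := c.hsδ; linarith)
            have hρδ : c.rad l ^ c.δ = c.rad l ^ (c.δ - c.s) * c.rad l ^ c.s := by
              rw [← Real.rpow_add hradpos]
              ring_nf
            have hB : (0:ℝ) < c.rad l ^ (c.δ - c.s) := Real.rpow_pos_of_pos hradpos _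
            have hA : (0:ℝ) < c.rad l ^ c.s := Real.rpow_pos_of_pos hradpos _
            calc ((c.Cw * c.rad l ^ c.s) / (c.κ * c.rad l ^ c.δ)) * (c.c₂ * (5*τ) ^ c.δ)
                ≤ ((c.Cw * c.rad l ^ c.s) / (c.κ * c.rad l ^ c.δ)) *
                  (c.c₂ * (5 ^ c.δ * (c.rad l ^ (c.δ - c.s) * τ ^ c.s))) := by
                  apply mul_le_mul_of_nonneg_left _ (by
                    have := c.Cw_pos
                    have := c.κ_pos
                    positivity)
                  rw [h5exp]
                  apply mul_le_mul_of_nonneg_left _ c.hc₂.le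
                  exact mul_le_mul_of_nonneg_left hτδ h5pos.le
              _ = (c.Cw * (c.c₂ * 5 ^ c.δ / c.κ)) * τ ^ c.s := by
                  rw [hρδ]
                  have hA' := hA.ne'
                  have hB' := hB.ne'
                  have hκ' := c.κ_pos.ne'
                  field_simp
              _ ≤ c.C₅ * τ ^ c.s := by
                  apply mul_le_mul_of_nonneg_right _ hτs.le
                  rw [C₅]
                  have h9 : c.c₂ * 5 ^ c.δ / c.κ ≤ 1 + c.c₂ * 5 ^ c.δ / c.κ := by linarith
                  exact mul_le_mul_of_nonneg_left h9 c.Cw_pos.le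

/-- the limit Cantor set -/
def KK : Set (Fin k → ℝ) := ⋂ m, ⋃ q ∈ c.P m, c.bal q

lemma level_compact (m : ℕ) : IsCompact (⋃ q ∈ (c.P m : Finset (List ℕ)), c.bal q) := by
  apply (c.P m).isCompact_biUnion
  intro q _
  exact isCompact_closedBall _ _

lemma level_decreasing (m : ℕ) :
    (⋃ q ∈ (c.P (m+1) : Finset (List ℕ)), c.bal q) ⊆ ⋃ q ∈ (c.P m : Finset (List ℕ)), c.bal q := by
  apply Set.iUnion₂_subset
  intro q hq
  obtain ⟨l, hl, a, ha, rfl⟩ := c.mem_P_succ.1 hq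
  exact (c.ball_mono_child (c.good_mem m l hl).1 ha).trans
    (Set.subset_iUnion₂ (s := fun q _ => c.bal q) l hl)

lemma level_antitone : ∀ {m m' : ℕ}, m ≤ m' →
    (⋃ q ∈ (c.P m' : Finset (List ℕ)), c.bal q) ⊆ ⋃ q ∈ (c.P m : Finset (List ℕ)), c.bal q := by
  intro m m' h
  induction m' with
  | zero =>
    have : m = 0 := by omega
    subst this
    exact subset_rfl
  | succ m' ih =>
    rcases Nat.eq_or_lt_of_le h with h1 | h2
    · subst h1
      exact subset_rfl
    · exact (c.level_decreasing m').trans (ih (by omega))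

lemma desc_nonempty : ∀ (j m : ℕ), ∀ l ∈ c.P m, (c.desc l (m + j)).Nonempty := by
  intro j
  induction j with
  | zero =>
    intro m l hl
    refine ⟨l, ?_⟩
    rw [desc, Finset.mem_filter]
    exact ⟨by simpa using hl, List.suffix_refl _⟩
  | succ j ih =>
    intro m l hl
    have hg := (c.good_mem m l hl).1
    have hcard := c.chl_nonempty hg
    obtain ⟨q, hq⟩ := ih (m+1) (0 :: l) (c.mem_P_succ.2 ⟨l, hl, 0, hcard, rfl⟩)
    rw [desc, Finset.mem_filter] at hq
    refine ⟨q, ?_⟩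
    rw [desc, Finset.mem_filter]
    refine ⟨by rw [show m + (j+1) = (m+1) + j by omega]; exact hq.1, ?_⟩
    exact (List.suffix_cons 0 l).trans hq.2

/-- every node ball contains a point of the Cantor set -/
lemma KK_meets_ball {m : ℕ} {l : List ℕ} (hl : l ∈ c.P m) :
    (c.KK ∩ c.bal l).Nonempty := by
  set D : ℕ → Set (Fin k → ℝ) := fun j => ⋃ q ∈ c.desc l (m + j), c.bal q with hD
  have hDne : ∀ j, (D j).Nonempty := by
    intro j
    obtain ⟨q, hq⟩ := c.desc_nonempty j m l hl
    have hqP : q ∈ c.P (m + j) := by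
      rw [desc, Finset.mem_filter] at hq
      exact hq.1
    exact ⟨c.ctr q, Set.mem_biUnion hq (c.bal_nonempty hqP)⟩
  have hDcomp : ∀ j, IsCompact (D j) := by
    intro j
    apply Finset.isCompact_biUnion
    intro q _
    exact isCompact_closedBall _ _
  have hDdec : ∀ j, D (j+1) ⊆ D j := by
    intro j
    apply Set.iUnion₂_subset
    intro q hq
    rw [desc, Finset.mem_filter] at hq
    have hq1 : q ∈ c.P ((m + j) + 1) := by
      rw [show (m+j)+1 = m + (j+1) by omega]
      exact hq.1
    obtain ⟨p, hp, a, ha, rfl⟩ := c.mem_P_succ.1 hq1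
    have hpd : p ∈ c.desc l (m + j) := by
      rw [desc, Finset.mem_filter]
      refine ⟨hp, ?_⟩
      rcases List.suffix_cons_iff.1 hq.2 with h1 | h2
      · exfalso
        have := congrArg List.length h1
        have h3 := (c.good_mem m l hl).2
        have h4 := (c.good_mem _ _ hp).2
        simp only [List.length_cons] at this
        omega
      · exact h2
    exact (c.ball_mono_child (c.good_mem _ _ hp).1 ha).trans
      (Set.subset_iUnion₂ (s := fun q _ => c.bal q) p hpd)
  have hmono : ∀ {i j : ℕ}, i ≤ j → D j ⊆ D i := by
    intro i j hij
    induction j with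
    | zero =>
      have : i = 0 := by omega
      subst this
      exact subset_rfl
    | succ j ih =>
      rcases Nat.eq_or_lt_of_le hij with h1 | h2
      · subst h1
        exact subset_rfl
      · exact (hDdec j).trans (ih (by omega))
  have hint : (⋂ j, D j).Nonempty := by
    apply IsCompact.nonempty_iInter_of_sequence_nonempty_isCompact_isClosed D hDdec hDne
      (hDcomp 0) (fun j => (hDcomp j).isClosed)
  obtain ⟨z, hz⟩ := hint
  rw [Set.mem_iInter] at hz
  refine ⟨z, ?_, ?_⟩
  · rw [KK, Set.mem_iInter]
    intro j
    rcases le_or_gt j m with h1 | h2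
    · apply c.level_antitone h1
      have := hz 0
      rw [hD] at this
      simp only at this
      apply Set.iUnion₂_subset (fun q hq => ?_) this
      rw [desc, Finset.mem_filter] at hq
      have : q ∈ c.P (m+0) := hq.1
      exact Set.subset_iUnion₂ (s := fun q _ => c.bal q) q (by simpa using this)
    · have := hz (j - m)
      rw [hD] at this
      simp only at this
      apply Set.iUnion₂_subset (fun q hq => ?_) this
      rw [desc, Finset.mem_filter] at hq
      have hqP : q ∈ c.P (m + (j - m)) := hq.1
      rw [show m + (j - m) = j by omega] at hqP
      exact Set.subset_iUnion₂ (s := fun q _ => c.bal q) q hqP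
  · have := hz 0
    rw [hD] at this
    simp only at this
    apply Set.iUnion₂_subset (fun q hq => ?_) this
    rw [desc, Finset.mem_filter] at hq
    have h1 := (c.good_mem m l hl).2
    have h2 := (c.good_mem _ _ (show q ∈ c.P (m+0) from hq.1)).2
    rw [List.IsSuffix.eq_of_length hq.2 (by omega)]

lemma KK_nonempty : c.KK.Nonempty := by
  have h0 : ([] : List ℕ) ∈ c.P 0 := by simp [P]
  obtain ⟨z, hz, _⟩ := c.KK_meets_ball h0
  exact ⟨z, hz⟩

lemma KK_compact : IsCompact c.KK := by
  apply IsCompact.of_isClosed_subset (c.level_compact 0)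
  · exact isClosed_iInter (fun m => (c.level_compact m).isClosed)
  · exact Set.iInter_subset _ 0

/-- the Cantor set is contained in the limsup of the shrunk balls -/
lemma KK_subset_limsup : c.KK ⊆ limsupSet (fun n => closedBall (c.x n) (c.r n ^ c.t)) := by
  intro z hz
  rw [limsupSet, Set.mem_iInter]
  intro N
  rw [KK, Set.mem_iInter] at hz
  have := hz (N+1)
  obtain ⟨q, hq, hzq⟩ := Set.mem_iUnion₂.1 this
  obtain ⟨n, hn, hctr, hrad⟩ := c.idx_ge N q hq
  apply Set.mem_iUnion₂.2
  refine ⟨n, by omega, ?_⟩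
  rw [bal, hctr, hrad] at hzq
  exact hzq

lemma desc_root (j : ℕ) : c.desc [] j = c.P j := by
  apply Finset.ext
  intro q
  rw [desc, Finset.mem_filter]
  exact ⟨fun h => h.1, fun h => ⟨h, List.nil_suffix⟩⟩

lemma root_mem : ([] : List ℕ) ∈ c.P 0 := by simp [P]

lemma w_root : c.w [] = 1 := by rw [w]

lemma sum_level (M : ℕ) : ∑ q ∈ c.P M, c.w q = 1 := by
  have := c.sum_desc M 0 [] c.root_mem
  rw [show (0 + M) = M by omega, c.desc_root, c.w_root] at this
  exact this

end Cfg

lemma rpow_add_le_two_rpow {a b s : ℝ} (ha : 0 ≤ a) (hb : 0 ≤ b) (hs : 0 ≤ s) :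
    (a + b) ^ s ≤ 2 ^ s * (a ^ s + b ^ s) := by
  rcases le_total a b with h | h
  · calc (a + b) ^ s ≤ (2 * b) ^ s :=
          Real.rpow_le_rpow (by linarith) (by linarith) hs
      _ = 2 ^ s * b ^ s := Real.mul_rpow (by norm_num) hb
      _ ≤ 2 ^ s * (a ^ s + b ^ s) := by
          have h1 : (0:ℝ) ≤ a ^ s := Real.rpow_nonneg ha _
          have h2 : (0:ℝ) < (2:ℝ) ^ s := Real.rpow_pos_of_pos (by norm_num) _
          nlinarith
  · calc (a + b) ^ s ≤ (2 * a) ^ s :=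
          Real.rpow_le_rpow (by linarith) (by linarith) hs
      _ = 2 ^ s * a ^ s := Real.mul_rpow (by norm_num) ha
      _ ≤ 2 ^ s * (a ^ s + b ^ s) := by
          have h1 : (0:ℝ) ≤ b ^ s := Real.rpow_nonneg hb _
          have h2 : (0:ℝ) < (2:ℝ) ^ s := Real.rpow_pos_of_pos (by norm_num) _
          nlinarith

namespace Cfg

def geo : ℝ := (1 - (1/2:ℝ) ^ c.s)⁻¹

lemma q_lt_one : (1/2:ℝ) ^ c.s < 1 :=
  Real.rpow_lt_one (by norm_num) (by norm_num) c.hs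

lemma q_pos : 0 < (1/2:ℝ) ^ c.s := Real.rpow_pos_of_pos (by norm_num) _

lemma geo_pos : 0 < c.geo := by
  rw [geo, inv_pos]
  have := c.q_lt_one
  linarith

def ηc : ℝ := min (c.τb/4) ((1 / (2 * c.C₅ * (4:ℝ) ^ c.s * c.geo)) ^ (1/c.s))

lemma ηc_pos : 0 < c.ηc := by
  apply lt_min
  · have := c.τb_pos; linarith
  · apply Real.rpow_pos_of_pos
    have h4 : (0:ℝ) < (4:ℝ) ^ c.s := Real.rpow_pos_of_pos (by norm_num) _
    have := c.C₅_pos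
    have := c.geo_pos
    positivity

lemma ηc_le : c.ηc ≤ c.τb/4 := min_le_left _ _

lemma ηc_spec : c.C₅ * (4:ℝ) ^ c.s * c.ηc ^ c.s * c.geo ≤ 1/2 := by
  have h4 : (0:ℝ) < (4:ℝ) ^ c.s := Real.rpow_pos_of_pos (by norm_num) _
  have hC := c.C₅_pos
  have hG := c.geo_pos
  have hbase : (0:ℝ) < 1 / (2 * c.C₅ * (4:ℝ) ^ c.s * c.geo) := by positivity
  have h1 : c.ηc ≤ (1 / (2 * c.C₅ * (4:ℝ) ^ c.s * c.geo)) ^ (1/c.s) := min_le_right _ _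
  have h2 : c.ηc ^ c.s ≤ ((1 / (2 * c.C₅ * (4:ℝ) ^ c.s * c.geo)) ^ (1/c.s)) ^ c.s :=
    Real.rpow_le_rpow c.ηc_pos.le h1 c.hs.le
  rw [← Real.rpow_mul hbase.le, one_div c.s, inv_mul_cancel₀ c.hs.ne', Real.rpow_one] at h2
  calc c.C₅ * (4:ℝ) ^ c.s * c.ηc ^ c.s * c.geo
      ≤ c.C₅ * (4:ℝ) ^ c.s * (1 / (2 * c.C₅ * (4:ℝ) ^ c.s * c.geo)) * c.geo := by
        apply mul_le_mul_of_nonneg_right _ hG.le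
        exact mul_le_mul_of_nonneg_left h2 (by positivity)
    _ = 1/2 := by
        field_simp

def ε₀ : ℝ := 1 / (2 * c.C₅ * (2:ℝ) ^ c.s)

lemma ε₀_pos : 0 < c.ε₀ := by
  have h2 : (0:ℝ) < (2:ℝ) ^ c.s := Real.rpow_pos_of_pos (by norm_num) _
  have := c.C₅_pos
  rw [ε₀]
  positivity

open Classical in
/-- any countable cover of `KK` by small sets has `s`-content bounded below -/
lemma cover_bound (tset : ℕ → Set (Fin k → ℝ)) (hcov : c.KK ⊆ ⋃ j, tset j)
    (hdiam : ∀ j, EMetric.diam (tset j) ≤ ENNReal.ofReal (c.τb/4)) :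
    ENNReal.ofReal c.ε₀ ≤ ∑' j, ⨆ _ : (tset j).Nonempty, EMetric.diam (tset j) ^ c.s := by
  have hτb := c.τb_pos
  have hdne : ∀ j, EMetric.diam (tset j) ≠ ⊤ :=
    fun j => ((hdiam j).trans_lt ENNReal.ofReal_lt_top).ne
  set d : ℕ → ℝ := fun j => (EMetric.diam (tset j)).toReal with hdd
  have hd0 : ∀ j, 0 ≤ d j := fun j => ENNReal.toReal_nonneg
  have hdτ : ∀ j, d j ≤ c.τb/4 := by
    intro j
    have := ENNReal.toReal_mono ENNReal.ofReal_ne_top (hdiam j)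
    rwa [ENNReal.toReal_ofReal (by linarith)] at this
  set η := c.ηc with hη
  have hη0 := c.ηc_pos
  -- choice of points
  set zc : ℕ → (Fin k → ℝ) := fun j =>
    if h : (tset j ∩ c.KK).Nonempty then h.choose else c.y₀ with hzc
  have hzc_mem : ∀ j, (tset j ∩ c.KK).Nonempty → zc j ∈ tset j := by
    intro j h
    rw [hzc]
    simp only [dif_pos h]
    exact h.choose_spec.1
  -- the open cover
  set A : ℕ → Set (Fin k → ℝ) := fun j => Metric.ball (zc j) (d j + η * (1/2)^j) with hA
  have hco : c.KK ⊆ ⋃ j, A j := by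
    intro z hz
    obtain ⟨j, hj⟩ := Set.mem_iUnion.1 (hcov hz)
    have hne : (tset j ∩ c.KK).Nonempty := ⟨z, hj, hz⟩
    apply Set.mem_iUnion.2 ⟨j, ?_⟩
    rw [hA]
    simp only [Metric.mem_ball]
    have h1 : edist z (zc j) ≤ EMetric.diam (tset j) :=
      EMetric.edist_le_diam_of_mem hj (hzc_mem j hne)
    have h2 : dist z (zc j) ≤ d j := by
      rw [dist_edist]
      exact ENNReal.toReal_mono (hdne j) h1
    have h3 : 0 < η * (1/2:ℝ)^j := by positivity
    linarith
  obtain ⟨Jf, hJf⟩ := c.KK_compact.elim_finite_subcover A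
    (fun j => Metric.isOpen_ball) hco
  have hJne : Jf.Nonempty := by
    by_contra h
    rw [Finset.not_nonempty_iff_eq_empty] at h
    obtain ⟨z, hz⟩ := c.KK_nonempty
    have := hJf hz
    rw [h] at this
    simp at this
  -- choose the level M
  set bJ := Jf.sup id with hbJ
  have hζex : ∃ M : ℕ, (1/4:ℝ)^M < η * (1/2)^bJ / (2 * c.ρ₀) := by
    apply _root_.exists_pow_lt_of_lt_one _ (by norm_num)
    have := c.ρ₀_pos
    positivity
  obtain ⟨M, hM⟩ := hζex
  set ζ := 2 * c.ρ₀ * (1/4:ℝ)^M with hζ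
  have hζ0 : 0 < ζ := by have := c.ρ₀_pos; positivity
  have hζle : ∀ j ∈ Jf, ζ ≤ η * (1/2)^j := by
    intro j hj
    have h1 : ζ ≤ η * (1/2)^bJ := by
      rw [hζ]
      have h2 : (0:ℝ) < 2 * c.ρ₀ := by have := c.ρ₀_pos; linarith
      calc 2 * c.ρ₀ * (1/4:ℝ)^M ≤ 2 * c.ρ₀ * (η * (1/2)^bJ / (2 * c.ρ₀)) :=
            mul_le_mul_of_nonneg_left hM.le h2.le
        _ = η * (1/2)^bJ := by have := c.ρ₀_pos.ne'; field_simp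
    have h3 : ((1/2:ℝ))^bJ ≤ (1/2)^j :=
      pow_le_pow_of_le_one (by norm_num) (by norm_num) (Finset.le_sup (f := id) hj)
    have h4 : η * (1/2:ℝ)^bJ ≤ η * (1/2)^j := mul_le_mul_of_nonneg_left h3 hη0.le
    linarith
  -- each level-M node ball fits in one of the enlarged balls
  set τ' : ℕ → ℝ := fun j => d j + η * (1/2)^j + ζ with hτ'
  have hτ'pos : ∀ j, 0 < τ' j := by
    intro j
    have : (0:ℝ) ≤ η * (1/2)^j := by positivity
    have := hd0 j
    rw [hτ']
    dsimp only
    linarith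
  have hτ'le : ∀ j ∈ Jf, τ' j ≤ c.τb := by
    intro j hj
    have h1 := hdτ j
    have h2 : η * (1/2:ℝ)^j ≤ η := by
      have : ((1/2:ℝ))^j ≤ 1 := pow_le_one₀ (by norm_num) (by norm_num)
      nlinarith
    have h3 := hζle j hj
    have h4 := c.ηc_le
    rw [hτ']
    dsimp only
    linarith
  have hex : ∀ q ∈ c.P M, ∃ j, j ∈ Jf ∧ c.bal q ⊆ closedBall (zc j) (τ' j) := by
    intro q hq
    obtain ⟨z, hzK, hzb⟩ := c.KK_meets_ball hq
    obtain ⟨j, hjJ, hjz⟩ := Set.mem_iUnion₂.1 (hJf hzK)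
    refine ⟨j, hjJ, ?_⟩
    intro p hp
    rw [mem_closedBall]
    have h1 : dist p z ≤ 2 * c.rad q := by
      have hp1 : dist p (c.ctr q) ≤ c.rad q := mem_closedBall.1 hp
      have hp2 : dist z (c.ctr q) ≤ c.rad q := mem_closedBall.1 hzb
      calc dist p z ≤ dist p (c.ctr q) + dist (c.ctr q) z := dist_triangle _ _ _
        _ ≤ 2 * c.rad q := by rw [dist_comm (c.ctr q) z]; linarith
    have h2 : dist z (zc j) < d j + η * (1/2)^j := by
      have := hjz
      rw [hA] at this
      simpa using this
    have h3 : 2 * c.rad q ≤ ζ := by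
      have := c.rad_le_level M q hq
      rw [hζ]
      have h5 : ((4:ℝ))⁻¹ ^ M = (1/4:ℝ)^M := by norm_num
      rw [← h5]
      linarith
    calc dist p (zc j) ≤ dist p z + dist z (zc j) := dist_triangle _ _ _
      _ ≤ ζ + (d j + η * (1/2)^j) := by linarith
      _ = τ' j := by rw [hτ']; ring
  -- the assignment function
  obtain ⟨j₀, hj₀⟩ := hJne
  set g : List ℕ → ℕ := fun q =>
    if h : ∃ j, j ∈ Jf ∧ c.bal q ⊆ closedBall (zc j) (τ' j) then h.choose else j₀ with hg
  have hg_mem : ∀ q ∈ c.P M, g q ∈ Jf ∧ c.bal q ⊆ closedBall (zc (g q)) (τ' (g q)) := by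
    intro q hq
    have h := hex q hq
    rw [hg]
    simp only [dif_pos h]
    exact h.choose_spec
  -- the weight partition
  have hpart : ∑ j ∈ Jf, ∑ q ∈ (c.P M).filter (fun q => g q = j), c.w q
      = ∑ q ∈ c.P M, c.w q :=
    Finset.sum_fiberwise_of_maps_to (fun q hq => (hg_mem q hq).1) _
  have hkey : (1:ℝ) ≤ c.C₅ * ∑ j ∈ Jf, τ' j ^ c.s := by
    have h1 : (1:ℝ) = ∑ j ∈ Jf, ∑ q ∈ (c.P M).filter (fun q => g q = j), c.w q := by
      rw [hpart, c.sum_level]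
    rw [h1, Finset.mul_sum]
    apply Finset.sum_le_sum
    intro j hj
    calc ∑ q ∈ (c.P M).filter (fun q => g q = j), c.w q
        ≤ ∑ q ∈ (c.P M).filter (fun q => c.bal q ⊆ closedBall (zc j) (τ' j)), c.w q := by
          apply Finset.sum_le_sum_of_subset_of_nonneg
          · intro q hq
            rw [Finset.mem_filter] at hq ⊢
            refine ⟨hq.1, ?_⟩
            have := (hg_mem q hq.1).2
            rwa [hq.2] at this
          · intro q hq _
            exact (c.w_pos M q (Finset.mem_filter.1 hq).1).le
      _ ≤ c.C₅ * τ' j ^ c.s := by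
          have := c.main_est M 0 [] c.root_mem (zc j) (τ' j) (hτ'pos j) (hτ'le j hj)
          rwa [show (0 + M) = M by omega, c.desc_root] at this
  -- real-side estimate of the cover sum
  have hq01 : (0:ℝ) ≤ (1/2:ℝ) ^ c.s := c.q_pos.le
  have hsumq : ∑ j ∈ Jf, ((1/2:ℝ) ^ c.s) ^ j ≤ c.geo := by
    rw [geo]
    calc ∑ j ∈ Jf, ((1/2:ℝ) ^ c.s) ^ j ≤ ∑' j : ℕ, ((1/2:ℝ) ^ c.s) ^ j :=
          Summable.sum_le_tsum Jf (fun j _ => by positivity)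
            (summable_geometric_of_lt_one hq01 c.q_lt_one)
      _ = (1 - (1/2:ℝ) ^ c.s)⁻¹ := tsum_geometric_of_lt_one hq01 c.q_lt_one
  have hterm : ∀ j ∈ Jf, τ' j ^ c.s ≤
      2 ^ c.s * (d j ^ c.s) + (4:ℝ) ^ c.s * η ^ c.s * ((1/2:ℝ) ^ c.s) ^ j := by
    intro j hj
    have h1 : τ' j ≤ d j + 2 * (η * (1/2:ℝ)^j) := by
      have := hζle j hj
      rw [hτ']
      dsimp only
      linarith
    have h2 : τ' j ^ c.s ≤ (d j + 2 * (η * (1/2:ℝ)^j)) ^ c.s :=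
      Real.rpow_le_rpow (hτ'pos j).le h1 c.hs.le
    have h3 : (d j + 2 * (η * (1/2:ℝ)^j)) ^ c.s ≤
        2 ^ c.s * (d j ^ c.s + (2 * (η * (1/2:ℝ)^j)) ^ c.s) :=
      rpow_add_le_two_rpow (hd0 j) (by positivity) c.hs.le
    have h4 : (2 * (η * (1/2:ℝ)^j)) ^ c.s
        = 2 ^ c.s * (η ^ c.s * ((1/2:ℝ)^j) ^ c.s) := by
      rw [Real.mul_rpow (by norm_num) (by positivity),
        Real.mul_rpow hη0.le (by positivity)]
    have h5 : ((1/2:ℝ)^j) ^ c.s = ((1/2:ℝ) ^ c.s) ^ j := by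
      rw [← Real.rpow_natCast (1/2:ℝ) j, ← Real.rpow_natCast ((1/2:ℝ) ^ c.s) j,
        ← Real.rpow_mul (by norm_num), ← Real.rpow_mul (by norm_num)]
      rw [mul_comm]
    have h6 : (2:ℝ) ^ c.s * 2 ^ c.s = (4:ℝ) ^ c.s := by
      rw [← Real.mul_rpow (by norm_num) (by norm_num)]
      norm_num
    calc τ' j ^ c.s ≤ 2 ^ c.s * (d j ^ c.s + (2 * (η * (1/2:ℝ)^j)) ^ c.s) := h2.trans h3
      _ = 2 ^ c.s * (d j ^ c.s) + 2 ^ c.s * ((2 * (η * (1/2:ℝ)^j)) ^ c.s) := by ring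
      _ = 2 ^ c.s * (d j ^ c.s) + (4:ℝ) ^ c.s * η ^ c.s * ((1/2:ℝ) ^ c.s) ^ j := by
          rw [h4, h5, ← h6]
          ring
  have hsum_d : c.ε₀ ≤ ∑ j ∈ Jf, d j ^ c.s := by
    have h2pos : (0:ℝ) < (2:ℝ) ^ c.s := Real.rpow_pos_of_pos (by norm_num) _
    have h4pos : (0:ℝ) < (4:ℝ) ^ c.s := Real.rpow_pos_of_pos (by norm_num) _
    have hC := c.C₅_pos
    have h7 : ∑ j ∈ Jf, τ' j ^ c.s ≤
        2 ^ c.s * ∑ j ∈ Jf, d j ^ c.s + (4:ℝ) ^ c.s * η ^ c.s * c.geo := by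
      calc ∑ j ∈ Jf, τ' j ^ c.s
          ≤ ∑ j ∈ Jf, (2 ^ c.s * (d j ^ c.s) + (4:ℝ) ^ c.s * η ^ c.s * ((1/2:ℝ) ^ c.s) ^ j) :=
            Finset.sum_le_sum hterm
        _ = 2 ^ c.s * ∑ j ∈ Jf, d j ^ c.s
            + (4:ℝ) ^ c.s * η ^ c.s * ∑ j ∈ Jf, ((1/2:ℝ) ^ c.s) ^ j := by
            rw [Finset.sum_add_distrib, Finset.mul_sum, Finset.mul_sum]
        _ ≤ 2 ^ c.s * ∑ j ∈ Jf, d j ^ c.s + (4:ℝ) ^ c.s * η ^ c.s * c.geo := by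
            have : (0:ℝ) ≤ (4:ℝ) ^ c.s * η ^ c.s := by positivity
            nlinarith [hsumq]
    have h8 : (1:ℝ) ≤ c.C₅ * (2 ^ c.s * ∑ j ∈ Jf, d j ^ c.s) + 1/2 := by
      have h9 := c.ηc_spec
      have h10 : c.C₅ * ((4:ℝ) ^ c.s * η ^ c.s * c.geo) ≤ 1/2 := by
        calc c.C₅ * ((4:ℝ) ^ c.s * η ^ c.s * c.geo)
            = c.C₅ * (4:ℝ) ^ c.s * c.ηc ^ c.s * c.geo := by rw [hη]; ring
          _ ≤ 1/2 := h9
      calc (1:ℝ) ≤ c.C₅ * ∑ j ∈ Jf, τ' j ^ c.s := hkey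
        _ ≤ c.C₅ * (2 ^ c.s * ∑ j ∈ Jf, d j ^ c.s + (4:ℝ) ^ c.s * η ^ c.s * c.geo) :=
            mul_le_mul_of_nonneg_left h7 hC.le
        _ = c.C₅ * (2 ^ c.s * ∑ j ∈ Jf, d j ^ c.s)
            + c.C₅ * ((4:ℝ) ^ c.s * η ^ c.s * c.geo) := by ring
        _ ≤ c.C₅ * (2 ^ c.s * ∑ j ∈ Jf, d j ^ c.s) + 1/2 := by linarith
    rw [ε₀]
    rw [div_le_iff₀ (by positivity)]
    nlinarith
  -- pass to `ℝ≥0∞`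
  calc ENNReal.ofReal c.ε₀ ≤ ENNReal.ofReal (∑ j ∈ Jf, d j ^ c.s) :=
        ENNReal.ofReal_le_ofReal hsum_d
    _ = ∑ j ∈ Jf, ENNReal.ofReal (d j ^ c.s) :=
        ENNReal.ofReal_sum_of_nonneg (fun j _ => by positivity)
    _ ≤ ∑ j ∈ Jf, ⨆ _ : (tset j).Nonempty, EMetric.diam (tset j) ^ c.s := by
        apply Finset.sum_le_sum
        intro j _
        rcases Set.eq_empty_or_nonempty (tset j) with he | hne
        · have : d j = 0 := by rw [hdd]; simp [he, EMetric.diam]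
          rw [this, Real.zero_rpow c.hs.ne']
          simp
        · rw [iSup_pos hne]
          have h1 : ENNReal.ofReal (d j ^ c.s) = EMetric.diam (tset j) ^ c.s := by
            rw [hdd]
            rw [ENNReal.toReal_rpow]
            rw [ENNReal.ofReal_toReal]
            exact ENNReal.rpow_ne_top_of_nonneg c.hs.le (hdne j)
          rw [h1]
    _ ≤ ∑' j, ⨆ _ : (tset j).Nonempty, EMetric.diam (tset j) ^ c.s :=
        ENNReal.sum_le_tsum Jf

/-- positivity of the Hausdorff measure of the Cantor set -/
lemma hausdorff_pos : μH[c.s] c.KK ≠ 0 := by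
  have hτb := c.τb_pos
  have h1 : ENNReal.ofReal c.ε₀ ≤ μH[c.s] c.KK := by
    rw [MeasureTheory.Measure.hausdorffMeasure_apply]
    refine le_trans ?_ (le_iSup₂ (ENNReal.ofReal (c.τb/4)) (by
      rw [ENNReal.ofReal_pos]; linarith))
    apply le_iInf₂
    intro tset hts
    apply le_iInf
    intro hdiam
    exact c.cover_bound tset hts hdiam
  intro h0
  rw [h0] at h1
  have := c.ε₀_pos
  simp only [nonpos_iff_eq_zero, ENNReal.ofReal_eq_zero] at h1
  linarith

/-- the dimension lower bound for the limsup set -/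
lemma dimH_ge : ENNReal.ofReal c.s ≤
    dimH (limsupSet fun n => closedBall (c.x n) (c.r n ^ c.t)) := by
  have h1 : ENNReal.ofReal c.s ≤ dimH c.KK := by
    have h2 : ((c.s.toNNReal : ℝ≥0) : ℝ) = c.s := Real.coe_toNNReal _ c.hs.le
    have h3 : μH[((c.s.toNNReal : ℝ≥0) : ℝ)] c.KK ≠ 0 := by rw [h2]; exact c.hausdorff_pos
    have h4 := le_dimH_of_hausdorffMeasure_ne_zero h3
    rwa [show ((c.s.toNNReal : ℝ≥0) : ℝ≥0∞) = ENNReal.ofReal c.s from rfl] at h4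
  exact h1.trans (dimH_mono c.KK_subset_limsup)

end Cfg
end JaffardProof

end

/-- Jaffard's theorem: dimension part. -/
theorem stmt5 (k : ℕ) (S : Set (Fin k → ℝ)) (δ : ℝ) (hδ : 0 < δ)
    (μ : Measure (Fin k → ℝ)) [IsProbabilityMeasure μ] (hsupp : μ Sᶜ = 0)
    (hreg : ∃ c₁ c₂ r₀ : ℝ, 0 < c₁ ∧ 0 < c₂ ∧ 0 < r₀ ∧
      ∀ x ∈ S, ∀ r : ℝ, 0 < r → r < r₀ →
        ENNReal.ofReal (c₁ * r ^ δ) ≤ μ (Metric.closedBall x r) ∧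
          μ (Metric.closedBall x r) ≤ ENNReal.ofReal (c₂ * r ^ δ))
    (x : ℕ → (Fin k → ℝ)) (hx : ∀ n, x n ∈ S) (r : ℕ → ℝ) (hr : ∀ n, 0 < r n)
    (hr0 : Filter.Tendsto r Filter.atTop (nhds 0))
    (hfull : μ (limsupSet fun n => Metric.closedBall (x n) (r n)) = 1) :
    ∀ t : ℝ, 1 ≤ t →
      ENNReal.ofReal (δ / t) ≤
        dimH (limsupSet fun n => Metric.closedBall (x n) (r n ^ t)) := by
  intro t ht
  obtain ⟨c₁, c₂, r₀, hc₁, hc₂, hr₀, hreg'⟩ := hreg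
  rcases Nat.eq_zero_or_pos k with hk0 | hk
  · -- `k = 0` is impossible: the upper regularity fails at small scales
    exfalso
    subst hk0
    set ρ : ℝ := min (r₀/2) ((1/(2*c₂)) ^ (1/δ)) with hρ
    have hbase : (0:ℝ) < 1/(2*c₂) := by positivity
    have hρ0 : 0 < ρ := lt_min (by linarith) (Real.rpow_pos_of_pos hbase _)
    have hρr₀ : ρ < r₀ := lt_of_le_of_lt (min_le_left _ _) (by linarith)
    have hup := (hreg' (x 0) (hx 0) ρ hρ0 hρr₀).2
    have huniv : Metric.closedBall (x 0) ρ = Set.univ := by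
      apply Set.eq_univ_of_forall
      intro p
      rw [Metric.mem_closedBall]
      have hpx : p = x 0 := funext fun i => i.elim0
      rw [hpx, dist_self]
      exact hρ0.le
    rw [huniv, measure_univ] at hup
    have hρδ : ρ ^ δ ≤ 1/(2*c₂) := by
      have h1 : ρ ≤ (1/(2*c₂)) ^ (1/δ) := min_le_right _ _
      have h2 : ρ ^ δ ≤ ((1/(2*c₂)) ^ (1/δ)) ^ δ := Real.rpow_le_rpow hρ0.le h1 hδ.le
      rwa [← Real.rpow_mul hbase.le, one_div δ, inv_mul_cancel₀ hδ.ne', Real.rpow_one] at h2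
    have h2 : c₂ * ρ ^ δ ≤ 1/2 := by
      calc c₂ * ρ ^ δ ≤ c₂ * (1/(2*c₂)) := mul_le_mul_of_nonneg_left hρδ hc₂.le
        _ = 1/2 := by field_simp
    have h3 : (1:ℝ≥0∞) ≤ ENNReal.ofReal (1/2) :=
      hup.trans (ENNReal.ofReal_le_ofReal h2)
    have h4 : ENNReal.ofReal (1/2) < 1 := ENNReal.ofReal_lt_one.2 (by norm_num)
    exact absurd h3 (not_le.2 h4)
  · by_contra hcon
    push_neg at hcon
    set D := dimH (limsupSet fun n => Metric.closedBall (x n) (r n ^ t)) with hD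
    have hDne : D ≠ ⊤ := (hcon.trans_le le_top).ne
    have ht0 : (0:ℝ) < t := lt_of_lt_of_le one_pos ht
    have hδt : 0 < δ/t := div_pos hδ ht0
    have hDr : D.toReal < δ/t := by
      have h1 := (ENNReal.toReal_lt_toReal hDne ENNReal.ofReal_ne_top).2 hcon
      rwa [ENNReal.toReal_ofReal hδt.le] at h1
    have hD0 : (0:ℝ) ≤ D.toReal := ENNReal.toReal_nonneg
    set s : ℝ := (D.toReal + δ/t)/2 with hs
    have hs0 : 0 < s := by rw [hs]; linarith
    have hsδt : s < δ/t := by rw [hs]; linarith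
    have hDs : D.toReal < s := by rw [hs]; linarith
    have hst : s * t < δ := (lt_div_iff₀ ht0).1 hsδt
    set c : JaffardProof.Cfg k :=
      { hk := hk, S := S, μ := μ, δ := δ, c₁ := c₁, c₂ := c₂, r₀ := r₀, t := t, s := s,
        x := x, r := r, y₀ := x 0, hy₀ := hx 0, hδ := hδ, hc₁ := hc₁, hc₂ := hc₂,
        hr₀ := hr₀, hprob := inferInstance, hreg := hreg', hxS := hx, hrpos := hr,
        hrtend := hr0, hfull := hfull, ht := ht, hs := hs0, hst := hst } with hc
    have hdim : ENNReal.ofReal s ≤ D := c.dimH_ge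
    have h3 : D < ENNReal.ofReal s := by
      calc D = ENNReal.ofReal D.toReal := (ENNReal.ofReal_toReal hDne).symm
        _ < ENNReal.ofReal s := (ENNReal.ofReal_lt_ofReal_iff hs0).2 hDs
    exact absurd hdim (not_le.2 h3)
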